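/- arXiv:math/0406019 — 7 statements merged into one kernel-verified Lean document; each statement's English description precedes it below -/
import Mathlib

section
/- If a polynomial h of degree at most d is symmetric with center of symmetry d/2 (i.e., t^d · h(1/t) = h(t)), has positive leading coefficient, and has only real non-positive zeros, then h lies in the non-negative span of the polynomials t^i(1+t)^{d-2i} for 0 ≤ i ≤ ⌊d/2⌋. -/
open Polynomial

/-- `Splus d h`: `h` lies in the non-negative span of the polynomials
`t^i (1+t)^(d-2i)` for `0 ≤ i ≤ ⌊d/2⌋`. -/
def Splus (d : ℕ) (h : Polynomial ℝ) : Prop :=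
  ∃ a : ℕ → ℝ, (∀ i, 0 ≤ a i) ∧
    h = ∑ i ∈ Finset.range (d / 2 + 1), C (a i) * X ^ i * (1 + X) ^ (d - 2 * i)

namespace SplusAux

/-- The generating set of the cone `Splus d`. -/
def gen (d : ℕ) : Set (Polynomial ℝ) :=
  {p | ∃ c : ℝ, ∃ i : ℕ, 0 ≤ c ∧ i ≤ d / 2 ∧ p = C c * X ^ i * (1 + X) ^ (d - 2 * i)}

theorem splus_add {d : ℕ} {p q : Polynomial ℝ} (hp : Splus d p) (hq : Splus d q) :
    Splus d (p + q) := by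
  obtain ⟨a, ha, rfl⟩ := hp
  obtain ⟨b, hb, rfl⟩ := hq
  refine ⟨a + b, fun i => add_nonneg (ha i) (hb i), ?_⟩
  rw [← Finset.sum_add_distrib]
  refine Finset.sum_congr rfl fun i _ => ?_
  simp [C_add, add_mul]

theorem splus_zero (d : ℕ) : Splus d 0 :=
  ⟨0, fun _ => le_refl _, by simp⟩

theorem splus_gen {d : ℕ} {p : Polynomial ℝ} (hp : p ∈ gen d) : Splus d p := by
  obtain ⟨c, i, hc, hi, rfl⟩ := hp
  refine ⟨fun j => if j = i then c else 0, fun j => by positivity, ?_⟩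
  have : ∀ j, C (if j = i then c else 0) * X ^ j * (1 + X) ^ (d - 2 * j)
      = if j = i then C c * X ^ j * (1 + X) ^ (d - 2 * j) else 0 := by
    intro j; split <;> simp
  rw [Finset.sum_congr rfl fun j _ => this j, Finset.sum_ite_eq' (Finset.range (d / 2 + 1)) i]
  rw [if_pos (Finset.mem_range.mpr (Nat.lt_succ_of_le hi))]

theorem splus_iff_closure {d : ℕ} {p : Polynomial ℝ} :
    Splus d p ↔ p ∈ AddSubmonoid.closure (gen d) := by
  constructor
  · rintro ⟨a, ha, rfl⟩
    refine AddSubmonoid.sum_mem _ fun i hi => ?_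
    exact AddSubmonoid.subset_closure
      ⟨a i, i, ha i, Nat.lt_succ_iff.mp (Finset.mem_range.mp hi), rfl⟩
  · intro hp
    refine AddSubmonoid.closure_induction (fun x hx => splus_gen hx) (splus_zero d)
      (fun x y _ _ hx hy => splus_add hx hy) hp

theorem splus_mul_X {d : ℕ} (hd : 2 ≤ d) {g : Polynomial ℝ} (hg : Splus (d - 2) g) :
    Splus d (X * g) := by
  rw [splus_iff_closure] at hg ⊢
  refine AddSubmonoid.closure_induction (motive := fun x _ => X * x ∈ AddSubmonoid.closure (gen d))
    ?_ (by simpa using (AddSubmonoid.closure (gen d)).zero_mem)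
    (fun x y _ _ hx hy => by simp only [mul_add]; exact AddSubmonoid.add_mem _ hx hy) hg
  rintro x ⟨c, i, hc, hi, rfl⟩
  have hle : 2 * i ≤ d - 2 := Nat.le_of_lt_succ (by
    have := Nat.lt_succ_of_le hi
    omega)
  have e2 : d - 2 - 2 * i = d - 2 * (i + 1) := by omega
  have : X * (C c * X ^ i * (1 + X) ^ (d - 2 - 2 * i))
      = C c * X ^ (i + 1) * (1 + X) ^ (d - 2 * (i + 1)) := by
    rw [← e2]; ring
  rw [this]
  exact AddSubmonoid.subset_closure ⟨c, i + 1, hc, by omega, rfl⟩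

theorem splus_mul_one_add_X {d : ℕ} (hd : 1 ≤ d) {g : Polynomial ℝ} (hg : Splus (d - 1) g) :
    Splus d ((1 + X) * g) := by
  rw [splus_iff_closure] at hg ⊢
  refine AddSubmonoid.closure_induction
    (motive := fun x _ => (1 + X) * x ∈ AddSubmonoid.closure (gen d))
    ?_ (by simpa using (AddSubmonoid.closure (gen d)).zero_mem)
    (fun x y _ _ hx hy => by simp only [mul_add]; exact AddSubmonoid.add_mem _ hx hy) hg
  rintro x ⟨c, i, hc, hi, rfl⟩
  have hle : 2 * i ≤ d - 1 := by omega
  have e1 : d - 1 - 2 * i + 1 = d - 2 * i := by omega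
  have : (1 + X) * (C c * X ^ i * (1 + X) ^ (d - 1 - 2 * i))
      = C c * X ^ i * (1 + X) ^ (d - 2 * i) := by
    rw [← e1]; ring
  rw [this]
  exact AddSubmonoid.subset_closure ⟨c, i, hc, by omega, rfl⟩

theorem splus_mul_quad {d : ℕ} (hd : 2 ≤ d) {c : ℝ} (hc : 0 ≤ c) {g : Polynomial ℝ}
    (hg : Splus (d - 2) g) : Splus d (((1 + X) ^ 2 + C c * X) * g) := by
  rw [splus_iff_closure] at hg ⊢
  refine AddSubmonoid.closure_induction
    (motive := fun x _ => ((1 + X) ^ 2 + C c * X) * x ∈ AddSubmonoid.closure (gen d))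
    ?_ (by simpa using (AddSubmonoid.closure (gen d)).zero_mem)
    (fun x y _ _ hx hy => by simp only [mul_add]; exact AddSubmonoid.add_mem _ hx hy) hg
  rintro x ⟨c', i, hc', hi, rfl⟩
  have hle : 2 * i ≤ d - 2 := by omega
  have e1 : d - 2 - 2 * i + 2 = d - 2 * i := by omega
  have e2 : d - 2 - 2 * i = d - 2 * (i + 1) := by omega
  have key : ((1 + X) ^ 2 + C c * X) * (C c' * X ^ i * (1 + X) ^ (d - 2 - 2 * i))
      = C c' * X ^ i * (1 + X) ^ (d - 2 * i)
        + C (c * c') * X ^ (i + 1) * (1 + X) ^ (d - 2 * (i + 1)) := by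
    rw [← e1, ← e2, C_mul]; ring
  rw [key]
  exact AddSubmonoid.add_mem _
    (AddSubmonoid.subset_closure ⟨c', i, hc', by omega, rfl⟩)
    (AddSubmonoid.subset_closure ⟨c * c', i + 1, mul_nonneg hc hc', by omega, rfl⟩)

theorem reflect_reflect (N : ℕ) (f : Polynomial ℝ) : (f.reflect N).reflect N = f := by
  ext i
  rw [coeff_reflect, coeff_reflect, revAt_invol]

theorem reflect_one_add_X : (1 + X : Polynomial ℝ).reflect 1 = 1 + X := by
  rw [reflect_add, reflect_one, reflect_one_X, pow_one, add_comm]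

/-- existence of a real nonpositive root, when degree is positive -/
theorem exists_real_root {h : Polynomial ℝ} (hpos : 0 < h.natDegree)
    (hroots : ∀ z : ℂ, aeval z h = 0 → z.im = 0 ∧ z.re ≤ 0) :
    ∃ r : ℝ, r ≤ 0 ∧ h.eval r = 0 := by
  have hmapdeg : 0 < (h.map (algebraMap ℝ ℂ)).degree := by
    rw [degree_map_eq_of_injective (algebraMap ℝ ℂ).injective]
    exact natDegree_pos_iff_degree_pos.mp hpos
  obtain ⟨z, hz⟩ := Complex.exists_root hmapdeg
  have hz' : aeval z h = 0 := by
    rwa [aeval_def, eval₂_eq_eval_map]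
  obtain ⟨him, hre⟩ := hroots z hz'
  refine ⟨z.re, hre, ?_⟩
  have hzre : (algebraMap ℝ ℂ) z.re = z := by
    apply Complex.ext <;> simp [him]
  have : aeval ((algebraMap ℝ ℂ) z.re) h = (algebraMap ℝ ℂ) (h.eval z.re) := by
    rw [aeval_def, eval₂_at_apply]
  rw [hzre, hz'] at this
  exact (map_eq_zero_iff _ (algebraMap ℝ ℂ).injective).mp this.symm

theorem inv_root {d : ℕ} {h : Polynomial ℝ} (hdeg : h.natDegree ≤ d)
    (hsym : h.reflect d = h) {r : ℝ} (hr0 : r ≠ 0) (hr : h.eval r = 0) :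
    h.eval r⁻¹ = 0 := by
  haveI : Invertible r := invertibleOfNonzero hr0
  have := (eval₂_reflect_eq_zero_iff (RingHom.id ℝ) r d h hdeg).mpr hr
  rw [hsym, invOf_eq_inv r] at this
  exact this

theorem main : ∀ d : ℕ, ∀ h : Polynomial ℝ, h.natDegree ≤ d → h.reflect d = h →
    0 < h.leadingCoeff → (∀ z : ℂ, aeval z h = 0 → z.im = 0 ∧ z.re ≤ 0) → Splus d h := by
  intro d
  induction d using Nat.strong_induction_on with
  | _ d IH =>
  intro h hdeg hsym hlead hroots
  have hne : h ≠ 0 := fun h0 => by simp [h0] at hlead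
  by_cases hd0 : h.natDegree = 0
  · -- constant case
    have hC : h = C (h.coeff 0) := eq_C_of_natDegree_eq_zero hd0
    have ha : h.coeff 0 ≠ 0 := fun h0 => hne (by rw [hC, h0, C_0])
    have hd : d = 0 := by
      have h1 : (C (h.coeff 0) : Polynomial ℝ).reflect d = C (h.coeff 0) := by
        rw [← hC]; exact hsym
      rw [reflect_C] at h1
      have := congrArg natDegree h1
      rwa [natDegree_C_mul_X_pow _ _ ha, natDegree_C] at this
    subst hd
    refine ⟨fun _ => h.coeff 0, fun i => ?_, by simp [← hC]⟩
    have : h.leadingCoeff = h.coeff 0 := by rw [leadingCoeff, hd0]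
    rw [← this]; exact le_of_lt hlead
  · have hpos : 0 < h.natDegree := Nat.pos_of_ne_zero hd0
    obtain ⟨r, hrle, hr⟩ := exists_real_root hpos hroots
    by_cases hrz : r = 0
    · -- root at zero : factor out X
      subst hrz
      have hcoeff0 : h.coeff 0 = 0 := by rwa [← coeff_zero_eq_eval_zero] at hr
      obtain ⟨g, hg⟩ : X ∣ h := X_dvd_iff.mpr hcoeff0
      have hcoeffd : h.coeff d = 0 := by
        rw [← hsym, coeff_reflect, revAt_le (le_refl d), Nat.sub_self, hcoeff0]
      have hdegd : h.natDegree ≠ d := fun e => by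
        rw [leadingCoeff, e, hcoeffd] at hlead; exact lt_irrefl 0 hlead
      have hdeg' : h.natDegree ≤ d - 1 := by omega
      have hgne : g ≠ 0 := fun h0 => hne (by rw [hg, h0, mul_zero])
      have hXg : h.natDegree = 1 + g.natDegree := by
        rw [hg, natDegree_mul X_ne_zero hgne, natDegree_X]
      have hd2 : 2 ≤ d := by omega
      have hgdeg : g.natDegree ≤ d - 2 := by omega
      have hsym1 : g.reflect (d - 1) = h := by
        have : d = 1 + (d - 1) := by omega
        rw [this, hg, reflect_mul X (g) (by rw [natDegree_X]) (by omega),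
          reflect_one_X, one_mul] at hsym
        rw [hsym, hg]
      have hgsym : g.reflect (d - 2) = g := by
        have h1 : g = (X * g).reflect (d - 1) := by
          rw [← hg, ← hsym1, reflect_reflect]
        have h2 : d - 1 = 1 + (d - 2) := by omega
        rw [h2, reflect_mul X g (by rw [natDegree_X]) hgdeg, reflect_one_X, one_mul] at h1
        exact h1.symm
      have hglead : 0 < g.leadingCoeff := by
        have : h.leadingCoeff = g.leadingCoeff := by
          rw [hg, leadingCoeff_mul, leadingCoeff_X, one_mul]
        rwa [this] at hlead
      have hgroots : ∀ z : ℂ, aeval z g = 0 → z.im = 0 ∧ z.re ≤ 0 := by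
        intro z hz
        exact hroots z (by rw [hg, map_mul, hz, mul_zero])
      have := IH (d - 2) (by omega) g hgdeg hgsym hglead hgroots
      rw [hg]
      exact splus_mul_X hd2 this
    by_cases hrm : r = -1
    · -- root at -1 : factor out (1+X)
      subst hrm
      obtain ⟨g, hg⟩ : (1 + X : Polynomial ℝ) ∣ h := by
        have : (X : Polynomial ℝ) - C (-1) = 1 + X := by
          rw [map_neg, C_1, sub_neg_eq_add, add_comm]
        rw [← this]
        exact dvd_iff_isRoot.mpr hr
      have hone : (1 + X : Polynomial ℝ) ≠ 0 := by
        intro h0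
        have := congrArg (eval 0) h0
        simp at this
      have hgne : g ≠ 0 := fun h0 => hne (by rw [hg, h0, mul_zero])
      have hXg : h.natDegree = 1 + g.natDegree := by
        rw [hg, natDegree_mul hone hgne]
        congr 1
        rw [add_comm, ← C_1, natDegree_X_add_C]
      have hd1 : 1 ≤ d := by omega
      have hgdeg : g.natDegree ≤ d - 1 := by omega
      have hgsym : g.reflect (d - 1) = g := by
        have h2 : d = 1 + (d - 1) := by omega
        rw [h2, hg, reflect_mul (1 + X) g
          (by rw [add_comm, ← C_1, natDegree_X_add_C]) hgdeg, reflect_one_add_X] at hsym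
        exact mul_left_cancel₀ hone hsym
      have hglead : 0 < g.leadingCoeff := by
        have : h.leadingCoeff = g.leadingCoeff := by
          rw [hg, leadingCoeff_mul]
          have : (1 + X : Polynomial ℝ).leadingCoeff = 1 := by
            rw [add_comm, ← C_1]; exact monic_X_add_C 1
          rw [this, one_mul]
        rwa [this] at hlead
      have hgroots : ∀ z : ℂ, aeval z g = 0 → z.im = 0 ∧ z.re ≤ 0 := by
        intro z hz
        exact hroots z (by rw [hg, map_mul, hz, mul_zero])
      have := IH (d - 1) (by omega) g hgdeg hgsym hglead hgroots
      rw [hg]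
      exact splus_mul_one_add_X hd1 this
    · -- generic negative root r, pair with r⁻¹
      have hrneg : r < 0 := lt_of_le_of_ne hrle hrz
      have hinv : h.eval r⁻¹ = 0 := inv_root hdeg hsym hrz hr
      have hrne : r ≠ r⁻¹ := by
        intro e
        have h1 : r * r = 1 := by
          nth_rewrite 2 [e]
          exact mul_inv_cancel₀ hrz
        rcases mul_self_eq_one_iff.mp h1 with h2 | h2
        · rw [h2] at hrneg; linarith
        · exact hrm h2
      set q : Polynomial ℝ := (X - C r) * (X - C r⁻¹) with hqdef
      have hqdvd : q ∣ h := by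
        refine (isCoprime_X_sub_C_of_isUnit_sub ?_).mul_dvd
          (dvd_iff_isRoot.mpr hr) (dvd_iff_isRoot.mpr hinv)
        exact (sub_ne_zero_of_ne hrne).isUnit
      obtain ⟨g, hg⟩ := hqdvd
      set c : ℝ := -(r + r⁻¹) - 2 with hcdef
      have hc : 0 ≤ c := by
        have h1 : r + r⁻¹ + 2 = (r + 1) ^ 2 / r := by
          field_simp; ring
        have h2 : (r + 1) ^ 2 / r ≤ 0 :=
          div_nonpos_of_nonneg_of_nonpos (sq_nonneg _) (le_of_lt hrneg)
        rw [hcdef]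
        nlinarith [h1, h2]
      have hq : q = (1 + X) ^ 2 + C c * X := by
        have h1 : (C r : Polynomial ℝ) * C r⁻¹ = 1 := by
          rw [← C_mul, mul_inv_cancel₀ hrz, C_1]
        have h2 : (C c : Polynomial ℝ) = -(C r + C r⁻¹) - 2 := by
          rw [hcdef, C_sub, C_neg, C_add]
          norm_num
          exact map_ofNat C 2
        rw [hqdef, h2]
        linear_combination h1
      have hqmonic : q.Monic := (monic_X_sub_C r).mul (monic_X_sub_C r⁻¹)
      have hqne : q ≠ 0 := hqmonic.ne_zero
      have hqdeg : q.natDegree = 2 := by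
        rw [hqdef, natDegree_mul (X_sub_C_ne_zero r) (X_sub_C_ne_zero r⁻¹),
          natDegree_X_sub_C, natDegree_X_sub_C]
      have hgne : g ≠ 0 := fun h0 => hne (by rw [hg, h0, mul_zero])
      have hdeg2 : h.natDegree = 2 + g.natDegree := by
        rw [hg, natDegree_mul hqne hgne, hqdeg]
      have hd2 : 2 ≤ d := by omega
      have hgdeg : g.natDegree ≤ d - 2 := by omega
      have hqrefl : q.reflect 2 = q := by
        have h1 : (C r : Polynomial ℝ) * C r⁻¹ = 1 := by
          rw [← C_mul, mul_inv_cancel₀ hrz, C_1]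
        have h2 : q = (1 + X) * (1 + X) + C c * X ^ 1 := by
          rw [hq]; ring
        rw [h2, reflect_add, reflect_C_mul_X_pow]
        have : (1 + X : Polynomial ℝ).natDegree ≤ 1 := by
          rw [add_comm, ← C_1]; exact (natDegree_X_add_C 1).le
        have h3 : ((1 + X) * (1 + X) : Polynomial ℝ).reflect 2 = (1 + X) * (1 + X) := by
          have h4 : (2 : ℕ) = 1 + 1 := rfl
          rw [h4, reflect_mul (1 + X) (1 + X) this this, reflect_one_add_X]
        rw [h3, revAt_le (by norm_num : (1:ℕ) ≤ 2)]
      have hgsym : g.reflect (d - 2) = g := by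
        have h2 : d = 2 + (d - 2) := by omega
        rw [h2, hg, reflect_mul q g (by rw [hqdeg]) hgdeg, hqrefl] at hsym
        exact mul_left_cancel₀ hqne hsym
      have hglead : 0 < g.leadingCoeff := by
        have : h.leadingCoeff = g.leadingCoeff := by
          rw [hg, leadingCoeff_mul, hqmonic.leadingCoeff, one_mul]
        rwa [this] at hlead
      have hgroots : ∀ z : ℂ, aeval z g = 0 → z.im = 0 ∧ z.re ≤ 0 := by
        intro z hz
        exact hroots z (by rw [hg, map_mul, hz, mul_zero])
      have := IH (d - 2) (by omega) g hgdeg hgsym hglead hgroots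
      rw [hg, hq]
      exact splus_mul_quad hd2 hc this

end SplusAux

/-- a symmetric (center `d/2`) polynomial of degree at most `d`,
with positive leading coefficient and only real non-positive zeros, lies in
the non-negative span of `t^i (1+t)^(d-2i)`, `0 ≤ i ≤ ⌊d/2⌋`. -/
theorem symmetric_real_rooted_mem_Splus (d : ℕ) (h : Polynomial ℝ)
    (hdeg : h.natDegree ≤ d)
    (hsym : h.reflect d = h)
    (hlead : 0 < h.leadingCoeff)
    (hroots : ∀ z : ℂ, aeval z h = 0 → z.im = 0 ∧ z.re ≤ 0) :
    Splus d h := by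
  exact SplusAux.main d h hdeg hsym hlead hroots
end

section
/- If a polynomial h lies in the non-negative span of the polynomials t^i(1+t)^{d-2i} for 0 ≤ i ≤ ⌊d/2⌋, then the coefficient sequence of h is unimodal: a_0 ≤ a_1 ≤ ... ≤ a_{⌊d/2⌋} ≥ ... ≥ a_d. -/
open Polynomial

lemma choose_step (n k : ℕ) (hk : 2 * k < n) : n.choose k ≤ n.choose (k + 1) := by
  have h1 : n.choose k * (k + 1) ≤ n.choose k * (n - k) := by
    apply Nat.mul_le_mul_left
    omega
  rw [← Nat.choose_succ_right_eq] at h1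
  exact Nat.le_of_mul_le_mul_right h1 (Nat.succ_pos k)

lemma choose_mono (n a b : ℕ) (hab : a ≤ b) (hb : 2 * b ≤ n + 1) :
    n.choose a ≤ n.choose b := by
  induction b with
  | zero => simp_all
  | succ c ih =>
    rcases Nat.eq_or_lt_of_le hab with rfl | hlt
    · exact le_refl _
    · exact le_trans (ih (by omega) (by omega)) (choose_step n c (by omega))

lemma basis_coeff (a : ℝ) (m n k : ℕ) :
    (C a * X ^ m * (1 + X) ^ n).coeff k =
      if m ≤ k then a * (n.choose (k - m) : ℝ) else 0 := by
  have : C a * X ^ m * (1 + X) ^ n = C a * (1 + X) ^ n * X ^ m := by ring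
  rw [this, Polynomial.coeff_mul_X_pow']
  split
  · rw [Polynomial.coeff_C_mul, Polynomial.coeff_one_add_X_pow]
  · rfl

/-- a member of the non-negative span of `t^i(1+t)^{d-2i}`,
`0 ≤ i ≤ ⌊d/2⌋`, has unimodal coefficient sequence
`a_0 ≤ a_1 ≤ ... ≤ a_{⌊d/2⌋} ≥ ... ≥ a_d`. -/
theorem Splus_unimodal (d : ℕ) (h : Polynomial ℝ) (hh : Splus d h) :
    (∀ i j : ℕ, i ≤ j → j ≤ d / 2 → h.coeff i ≤ h.coeff j) ∧
    (∀ i j : ℕ, d / 2 ≤ i → i ≤ j → j ≤ d → h.coeff j ≤ h.coeff i) := by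
  obtain ⟨a, ha, rfl⟩ := hh
  have coeff_eq : ∀ k, (∑ i ∈ Finset.range (d / 2 + 1),
      C (a i) * X ^ i * (1 + X) ^ (d - 2 * i)).coeff k =
      ∑ m ∈ Finset.range (d / 2 + 1),
        (if m ≤ k then a m * ((d - 2 * m).choose (k - m) : ℝ) else 0) := by
    intro k
    rw [Polynomial.finset_sum_coeff]
    exact Finset.sum_congr rfl fun m _ => basis_coeff (a m) m (d - 2 * m) k
  constructor
  · intro i j hij hj
    rw [coeff_eq, coeff_eq]
    apply Finset.sum_le_sum
    intro m hm
    rw [Finset.mem_range] at hm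
    split
    · have hmj : m ≤ j := le_trans (by assumption) hij
      rw [if_pos hmj]
      apply mul_le_mul_of_nonneg_left _ (ha m)
      exact_mod_cast choose_mono (d - 2 * m) (i - m) (j - m) (by omega) (by omega)
    · split
      · exact mul_nonneg (ha m) (by positivity)
      · exact le_refl _
  · intro i j hi hij hj
    rw [coeff_eq, coeff_eq]
    apply Finset.sum_le_sum
    intro m hm
    rw [Finset.mem_range] at hm
    have hmi : m ≤ i := le_trans (by omega) hi
    have hmj : m ≤ j := le_trans hmi hij
    rw [if_pos hmi, if_pos hmj]
    apply mul_le_mul_of_nonneg_left _ (ha m)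
    set n := d - 2 * m with hn
    by_cases hbn : j - m ≤ n
    · have h1 : n.choose (j - m) = n.choose (n - (j - m)) :=
        (Nat.choose_symm hbn).symm
      have h2 : n.choose (i - m) = n.choose (n - (i - m)) :=
        (Nat.choose_symm (by omega)).symm
      rw [h1, h2]
      exact_mod_cast choose_mono n (n - (j - m)) (n - (i - m)) (by omega) (by omega)
    · rw [Nat.choose_eq_zero_of_lt (by omega)]
      simp [Nat.cast_nonneg]
end

section
/- For a finite poset P with labeling ε: E(P) → {-1,1} of its covering relations such that P is ε-graded of rank r(ε), the order polynomial satisfies Ω(P,ε;t) = (-1)^{|P|} Ω(P,ε;-t-r(ε)). -/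
open Polynomial

variable {P : Type*}

/-- The ε-weight of a chain `x₀ ⋖ x₁ ⋖ ⋯ ⋖ xₙ`, recorded as a list:
the sum `Σ ε(x_{i-1}, x_i)` over consecutive pairs. -/
def chainWeight (ε : P → P → ℤ) (c : List P) : ℤ :=
  ((c.zip c.tail).map fun q => ε q.1 q.2).sum

/-- A (nonempty) saturated chain of the poset `P`, as a list of elements with
each member covered by the next. -/
def IsSatChain [PartialOrder P] (c : List P) : Prop :=
  c ≠ [] ∧ c.Chain' (· ⋖ ·)

/-- A maximal chain: a saturated chain starting at a minimal element and
ending at a maximal element. -/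
def IsMaxChainL [PartialOrder P] (c : List P) : Prop :=
  IsSatChain c ∧ (∀ x ∈ c.head?, IsMin x) ∧ (∀ x ∈ c.getLast?, IsMax x)

/-- A saturated chain starting at a minimal element of `P` and ending at `x`. -/
def IsSatChainFromMinTo [PartialOrder P] (x : P) (c : List P) : Prop :=
  IsSatChain c ∧ (∀ y ∈ c.head?, IsMin y) ∧ c.getLast? = some x

/-- `ε` takes only the values `1` and `-1` on covering relations. -/
def IsSignLabeling [PartialOrder P] (ε : P → P → ℤ) : Prop :=
  ∀ x y : P, x ⋖ y → ε x y = 1 ∨ ε x y = -1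

/-- `P` is `ε`-graded of rank `r`: every maximal chain has ε-weight `r`. -/
def IsEGraded [PartialOrder P] (ε : P → P → ℤ) (r : ℤ) : Prop :=
  ∀ c : List P, IsMaxChainL c → chainWeight ε c = r

/-- A `(P,ε)`-partition: an order-reversing map `σ : P → {1,2,…}` which is
strict on covering relations labeled `-1`. -/
def IsPPartition [PartialOrder P] (ε : P → P → ℤ) (σ : P → ℤ) : Prop :=
  (∀ x, 1 ≤ σ x) ∧ (∀ x y : P, x ≤ y → σ y ≤ σ x) ∧
  (∀ x y : P, x ⋖ y → ε x y = -1 → σ y < σ x)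

/-- `Ω(P,ε;n)`: the number of `(P,ε)`-partitions with largest part at most `n`. -/
noncomputable def OmegaCount [PartialOrder P] (ε : P → P → ℤ) (n : ℕ) : ℕ :=
  Nat.card {σ : P → ℤ // IsPPartition ε σ ∧ ∀ x, σ x ≤ (n : ℤ)}

section Aux
variable [PartialOrder P] [Fintype P]

set_option linter.unusedSectionVars false

lemma chainWeight_cons_cons (ε : P → P → ℤ) (x y : P) (l : List P) :
    chainWeight ε (x :: y :: l) = ε x y + chainWeight ε (y :: l) := by
  simp [chainWeight]

lemma chainWeight_append (ε : P → P → ℤ) :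
    ∀ (l : List P) (x : P) (m : List P),
      chainWeight ε (l ++ x :: m) = chainWeight ε (l ++ [x]) + chainWeight ε (x :: m)
  | [], x, m => by simp [chainWeight]
  | [a], x, m => by simp [chainWeight_cons_cons, chainWeight]
  | a :: b :: l, x, m => by
    have := chainWeight_append ε (b :: l) x m
    simp only [List.cons_append, chainWeight_cons_cons] at *
    omega

lemma exists_isMax_ge (x : P) : ∃ m, x ≤ m ∧ IsMax m := by
  induction x using WellFoundedGT.induction with
  | _ x ih =>
    by_cases hx : IsMax x
    · exact ⟨x, le_rfl, hx⟩
    · obtain ⟨y, hy⟩ := not_isMax_iff.mp hx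
      obtain ⟨m, hm1, hm2⟩ := ih y hy
      exact ⟨m, hy.le.trans hm1, hm2⟩

lemma exists_isMin_le (x : P) : ∃ m, m ≤ x ∧ IsMin m := by
  induction x using WellFoundedLT.induction with
  | _ x ih =>
    by_cases hx : IsMin x
    · exact ⟨x, le_rfl, hx⟩
    · obtain ⟨y, hy⟩ := not_isMin_iff.mp hx
      obtain ⟨m, hm1, hm2⟩ := ih y hy
      exact ⟨m, hm1.trans hy.le, hm2⟩

lemma le_reflTransGen_covBy {x y : P} (h : x ≤ y) : Relation.ReflTransGen (· ⋖ ·) x y := by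
  classical
  haveI : LocallyFiniteOrder P := Fintype.toLocallyFiniteOrder
  exact le_iff_reflTransGen_covBy.mp h

lemma antitone_of_covBy {f : P → ℤ} (h : ∀ a b : P, a ⋖ b → f b ≤ f a)
    {x y : P} (hxy : x ≤ y) : f y ≤ f x := by
  have h' := le_reflTransGen_covBy hxy
  clear hxy
  induction h' with
  | refl => exact le_rfl
  | tail _ hbc ih => exact (h _ _ hbc).trans ih

/-- Existence of a saturated chain from a minimal element to `x`. -/
lemma exists_satChainFromMinTo (x : P) : ∃ c, IsSatChainFromMinTo x c := by
  induction x using WellFoundedLT.induction with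
  | _ x ih =>
    by_cases hx : IsMin x
    · exact ⟨[x], ⟨List.cons_ne_nil _ _, List.isChain_singleton x⟩, by simp [hx], rfl⟩
    · obtain ⟨y, hy⟩ := not_isMin_iff.mp hx
      obtain ⟨z, hz, hzx⟩ := hy.exists_le_covby
      obtain ⟨c, ⟨hc1, hc2⟩, hc3, hc4⟩ := ih z hzx.lt
      refine ⟨c ++ [x], ⟨by simp [hc1], ?_⟩, ?_, ?_⟩
      · refine List.isChain_append.mpr ?_
        refine ⟨hc2, List.isChain_singleton x, ?_⟩
        intro a ha b hb
        rw [hc4] at ha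
        cases ha
        cases hb
        exact hzx
      · rwa [List.head?_append_of_ne_nil _ hc1]
      · simp

/-- Existence of a saturated chain from `x` to a maximal element. -/
lemma exists_satChainToMax (x : P) :
    ∃ d : List P, IsSatChain d ∧ d.head? = some x ∧ (∀ y ∈ d.getLast?, IsMax y) := by
  induction x using WellFoundedGT.induction with
  | _ x ih =>
    by_cases hx : IsMax x
    · exact ⟨[x], ⟨List.cons_ne_nil _ _, List.isChain_singleton x⟩, rfl, by simp [hx]⟩
    · obtain ⟨y, hy⟩ := not_isMax_iff.mp hx
      obtain ⟨z, hxz, hzy⟩ := hy.exists_covby_le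
      obtain ⟨d, ⟨hd1, hd2⟩, hd3, hd4⟩ := ih z (hxz.lt)
      refine ⟨x :: d, ⟨List.cons_ne_nil _ _, ?_⟩, rfl, ?_⟩
      · refine List.isChain_cons.mpr ?_
        exact ⟨fun a ha => by rw [hd3] at ha; cases ha; exact hxz, hd2⟩
      · intro a ha
        rw [show x :: d = [x] ++ d from rfl, List.getLast?_append_of_ne_nil _ hd1] at ha
        exact hd4 a ha

end Aux
section Rho
variable [PartialOrder P] [Fintype P]
set_option linter.unusedSectionVars false

noncomputable def rho (ε : P → P → ℤ) (x : P) : ℤ :=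
  chainWeight ε (exists_satChainFromMinTo x).choose

lemma glue_isMaxChain {x : P} {c d : List P}
    (hc : IsSatChainFromMinTo x c) (hd1 : IsSatChain d) (hd2 : d.head? = some x)
    (hd3 : ∀ y ∈ d.getLast?, IsMax y) :
    IsMaxChainL (c ++ d.tail) ∧
      ∀ ε : P → P → ℤ, chainWeight ε (c ++ d.tail) = chainWeight ε c + chainWeight ε d := by
  obtain ⟨⟨hc1, hc2⟩, hc3, hc4⟩ := hc
  obtain ⟨d', rfl⟩ : ∃ d', d = x :: d' := by
    cases d with
    | nil => simp at hd2
    | cons a d' =>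
      simp only [List.head?_cons, Option.some.injEq] at hd2
      exact ⟨d', by rw [hd2]⟩
  have hcd : c = c.dropLast ++ [x] := by
    conv_lhs => rw [← List.dropLast_append_getLast hc1]
    rw [List.getLast?_eq_getLast hc1] at hc4
    simp at hc4
    rw [hc4]
  have hcov : ∀ b ∈ d'.head?, x ⋖ b := (List.isChain_cons.mp hd1.2).1
  constructor
  · refine ⟨⟨by simp [hc1], ?_⟩, ?_, ?_⟩
    · refine List.isChain_append.mpr ?_
      refine ⟨hc2, hd1.2.tail, ?_⟩
      intro a ha b hb
      rw [hc4] at ha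
      cases ha
      exact hcov b hb
    · rw [List.head?_append_of_ne_nil _ hc1]; exact hc3
    · intro a ha
      rw [List.getLast?_append] at ha
      cases d' with
      | nil =>
        simp at ha
        rw [hc4] at ha
        cases ha
        exact hd3 x (by simp)
      | cons e t =>
        simp only [List.tail_cons] at ha
        rw [List.getLast?_eq_getLast (List.cons_ne_nil e t), Option.some_or,
          Option.mem_def, Option.some.injEq] at ha
        subst ha
        exact hd3 _ (by rw [List.getLast?_cons_cons, List.getLast?_eq_getLast (List.cons_ne_nil e t)]; rfl)
  · intro ε
    conv_lhs => rw [hcd]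
    simp only [List.tail_cons]
    rw [List.append_assoc, List.singleton_append, chainWeight_append]
    congr 1
    rw [← hcd]

lemma chainWeight_eq_rho {ε : P → P → ℤ} {r : ℤ} (hgr : IsEGraded ε r) {x : P} {c : List P}
    (hc : IsSatChainFromMinTo x c) : chainWeight ε c = rho ε x := by
  obtain ⟨d, hd1, hd2, hd3⟩ := exists_satChainToMax x
  have h1 := glue_isMaxChain hc hd1 hd2 hd3
  have h2 := glue_isMaxChain (exists_satChainFromMinTo x).choose_spec hd1 hd2 hd3
  have e1 := hgr _ h1.1
  have e2 := hgr _ h2.1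
  rw [h1.2 ε] at e1
  rw [h2.2 ε] at e2
  unfold rho
  omega

lemma rho_covBy {ε : P → P → ℤ} {r : ℤ} (hgr : IsEGraded ε r) {x y : P} (hxy : x ⋖ y) :
    rho ε y = rho ε x + ε x y := by
  obtain ⟨⟨hc1, hc2⟩, hc3, hc4⟩ := (exists_satChainFromMinTo x).choose_spec
  set c := (exists_satChainFromMinTo x).choose with hc
  have hchain : IsSatChainFromMinTo y (c ++ [y]) := by
    refine ⟨⟨by simp [hc1], ?_⟩, ?_, by simp⟩
    · refine List.isChain_append.mpr ?_
      refine ⟨hc2, List.isChain_singleton y, ?_⟩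
      intro a ha b hb
      rw [hc4] at ha; cases ha; cases hb; exact hxy
    · rw [List.head?_append_of_ne_nil _ hc1]; exact hc3
  have hw : chainWeight ε (c ++ [y]) = chainWeight ε c + ε x y := by
    have hcd : c = c.dropLast ++ [x] := by
      conv_lhs => rw [← List.dropLast_append_getLast hc1]
      rw [List.getLast?_eq_getLast hc1] at hc4
      simp at hc4
      rw [hc4]
    conv_lhs => rw [hcd]
    rw [List.append_assoc, List.singleton_append, chainWeight_append, ← hcd]
    simp [chainWeight_cons_cons, chainWeight]
  have := chainWeight_eq_rho hgr hchain
  rw [hw] at this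
  have h2 : chainWeight ε c = rho ε x := rfl
  omega

lemma rho_isMax {ε : P → P → ℤ} {r : ℤ} (hgr : IsEGraded ε r) {x : P} (hx : IsMax x) :
    rho ε x = r := by
  obtain ⟨⟨hc1, hc2⟩, hc3, hc4⟩ := (exists_satChainFromMinTo x).choose_spec
  exact (hgr _ ⟨⟨hc1, hc2⟩, hc3, fun a ha => by rw [hc4] at ha; cases ha; exact hx⟩)

lemma chain_ending_at_min {x : P} (hx : IsMin x) :
    ∀ c : List P, c.Chain' (· ⋖ ·) → c.getLast? = some x → c = [x]
  | [], _, h => by simp at h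
  | [a], _, h => by simp only [List.getLast?_singleton, Option.some.injEq] at h; rw [h]
  | a :: b :: t, hch, h => by
    rw [List.getLast?_cons_cons] at h
    have ht := chain_ending_at_min hx (b :: t) ((List.isChain_cons_cons.mp hch).2) h
    have hab := (List.isChain_cons_cons.mp hch).1
    rw [List.cons.injEq] at ht
    exact absurd (ht.1 ▸ hab) (fun hc => hx.not_lt hc.lt)

lemma rho_isMin {ε : P → P → ℤ} {x : P} (hx : IsMin x) : rho ε x = 0 := by
  obtain ⟨⟨hc1, hc2⟩, hc3, hc4⟩ := (exists_satChainFromMinTo x).choose_spec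
  have := chain_ending_at_min hx _ hc2 hc4
  unfold rho
  rw [this]
  simp [chainWeight]

end Rho

section Count
variable [PartialOrder P] [Fintype P]
set_option linter.unusedSectionVars false

lemma omega_shift {ε : P → P → ℤ} (hsign : IsSignLabeling ε) {r : ℤ} (hgr : IsEGraded ε r)
    (n N : ℕ) (hN : (N : ℤ) = (n : ℤ) + r) :
    OmegaCount ε n = OmegaCount (fun x y => -ε x y) N := by
  apply Nat.card_congr
  have key1 : ∀ σ : P → ℤ, (IsPPartition ε σ ∧ ∀ x, σ x ≤ (n : ℤ)) →
      (IsPPartition (fun x y => -ε x y) (fun x => σ x - rho ε x + r) ∧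
        ∀ x, (fun x => σ x - rho ε x + r) x ≤ (N : ℤ)) := by
    rintro σ ⟨⟨h1, h2, h3⟩, h4⟩
    have cov : ∀ a b : P, a ⋖ b →
        (fun x => σ x - rho ε x + r) b ≤ (fun x => σ x - rho ε x + r) a := by
      intro a b hab
      have hr := rho_covBy hgr hab
      have hle := h2 a b hab.le
      dsimp only
      rcases hsign a b hab with hs | hs
      · omega
      · have := h3 a b hab hs; omega
    refine ⟨⟨fun x => ?_, fun x y hxy => antitone_of_covBy cov hxy, fun a b hab hs => ?_⟩,
      fun x => ?_⟩
    · obtain ⟨m, hxm, hm⟩ := exists_isMax_ge x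
      have h5 := antitone_of_covBy cov hxm
      have h6 := rho_isMax hgr hm
      have h7 := h1 m
      dsimp only at *
      omega
    · have hs' : -ε a b = -1 := hs
      have hr := rho_covBy hgr hab
      have hle := h2 a b hab.le
      dsimp only
      omega
    · obtain ⟨m, hmx, hm⟩ := exists_isMin_le x
      have h5 := antitone_of_covBy cov hmx
      have h6 := rho_isMin (ε := ε) hm
      have h7 := h4 m
      dsimp only at *
      omega
  have key2 : ∀ τ : P → ℤ, (IsPPartition (fun x y => -ε x y) τ ∧ ∀ x, τ x ≤ (N : ℤ)) →
      (IsPPartition ε (fun x => τ x + rho ε x - r) ∧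
        ∀ x, (fun x => τ x + rho ε x - r) x ≤ (n : ℤ)) := by
    rintro τ ⟨⟨h1, h2, h3⟩, h4⟩
    have cov : ∀ a b : P, a ⋖ b →
        (fun x => τ x + rho ε x - r) b ≤ (fun x => τ x + rho ε x - r) a := by
      intro a b hab
      have hr := rho_covBy hgr hab
      have hle := h2 a b hab.le
      dsimp only
      rcases hsign a b hab with hs | hs
      · have := h3 a b hab (show -ε a b = -1 by omega); omega
      · omega
    refine ⟨⟨fun x => ?_, fun x y hxy => antitone_of_covBy cov hxy, fun a b hab hs => ?_⟩,
      fun x => ?_⟩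
    · obtain ⟨m, hxm, hm⟩ := exists_isMax_ge x
      have h5 := antitone_of_covBy cov hxm
      have h6 := rho_isMax hgr hm
      have h7 := h1 m
      dsimp only at *
      omega
    · have hr := rho_covBy hgr hab
      have hle := h2 a b hab.le
      dsimp only
      omega
    · obtain ⟨m, hmx, hm⟩ := exists_isMin_le x
      have h5 := antitone_of_covBy cov hmx
      have h6 := rho_isMin (ε := ε) hm
      have h7 := h4 m
      dsimp only at *
      omega
  exact
    { toFun := fun σ => ⟨fun x => σ.1 x - rho ε x + r, key1 σ.1 σ.2⟩
      invFun := fun τ => ⟨fun x => τ.1 x + rho ε x - r, key2 τ.1 τ.2⟩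
      left_inv := fun σ => Subtype.ext (funext fun x => by ring)
      right_inv := fun τ => Subtype.ext (funext fun x => by ring) }

end Count

/-- if `P` is `ε`-graded of rank `r(ε)` then the order polynomial
satisfies `Ω(P,ε;t) = (-1)^|P| Ω(P,ε;-t-r(ε))` (reciprocity
`Ω(P,-ε;t) = (-1)^p Ω(P,ε;-t)` is assumed as a known fact). -/
theorem order_polynomial_symmetry {P : Type*} [PartialOrder P] [Fintype P] [Nonempty P]
    (ε : P → P → ℤ) (hsign : IsSignLabeling ε)
    (r : ℤ) (hgr : IsEGraded ε r)
    (Ω Ω' : Polynomial ℚ)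
    (hΩ : ∀ n : ℕ, Ω.eval (n : ℚ) = OmegaCount ε n)
    (hΩ' : ∀ n : ℕ, Ω'.eval (n : ℚ) = OmegaCount (fun x y => -ε x y) n)
    (hrec : Ω' = (-1) ^ (Fintype.card P) * Ω.comp (-X)) :
    Ω = (-1) ^ (Fintype.card P) * Ω.comp (-X - C (r : ℚ)) := by
  apply Polynomial.eq_of_infinite_eval_eq
  apply Set.infinite_of_injective_forall_mem
    (f := fun k : ℕ => (((-r).toNat + k : ℕ) : ℚ))
  · intro a b hab
    have : ((-r).toNat + a : ℕ) = ((-r).toNat + b : ℕ) := Nat.cast_injective hab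
    omega
  · intro k
    set n : ℕ := (-r).toNat + k with hn
    have hge : 0 ≤ (n : ℤ) + r := by
      have := Int.self_le_toNat (-r)
      simp only [hn]
      push_cast
      omega
    set N : ℕ := ((n : ℤ) + r).toNat with hNdef
    have hN : (N : ℤ) = (n : ℤ) + r := Int.toNat_of_nonneg hge
    have hNQ : (N : ℚ) = (n : ℚ) + (r : ℚ) := by
      have := congrArg (fun z : ℤ => (z : ℚ)) hN
      push_cast at this
      exact this
    simp only [Set.mem_setOf_eq]
    have e1 : Ω.eval (n : ℚ) = OmegaCount ε n := hΩ n
    have e2 : OmegaCount ε n = OmegaCount (fun x y => -ε x y) N :=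
      omega_shift hsign hgr n N hN
    have e3 : (Ω'.eval (N : ℚ) : ℚ) = OmegaCount (fun x y => -ε x y) N := hΩ' N
    have e4 : Ω'.eval (N : ℚ) = (-1 : ℚ) ^ (Fintype.card P) * Ω.eval (-(N : ℚ)) := by
      rw [hrec]
      simp [Polynomial.eval_comp]
    have e5 : ((-1 : ℚ[X]) ^ (Fintype.card P) * Ω.comp (-X - C (r : ℚ))).eval (n : ℚ)
        = (-1 : ℚ) ^ (Fintype.card P) * Ω.eval (-(n : ℚ) - (r : ℚ)) := by
      simp [Polynomial.eval_comp]
    rw [e5, e1, e2, ← e3, e4, hNQ]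
    ring_nf
end

section
/- A finite poset P admits a labeling ε: E(P) → {-1,1} making P ε-graded if and only if P is parity graded, i.e., all maximal chains of P have cardinality of the same parity. Moreover, in that case ε can be chosen so that the rank function takes values in {0,1}. -/
open Polynomial

variable {P : Type*}

/-- `P` is parity graded: all maximal chains have cardinality of the same parity. -/
def ParityGraded (P : Type*) [PartialOrder P] : Prop :=
  ∀ c c' : List P, IsMaxChainL c → IsMaxChainL c' → c.length % 2 = c'.length % 2


set_option linter.unusedSectionVars false

section Aux
variable [PartialOrder P]

lemma cw_cons (ε : P → P → ℤ) (a b : P) (t : List P) :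
    chainWeight ε (a :: b :: t) = ε a b + chainWeight ε (b :: t) := by
  simp [chainWeight]

lemma cw_tele (f : P → ℤ) : ∀ (c : List P) (h : c ≠ []),
    chainWeight (fun a b => f b - f a) c = f (c.getLast h) - f (c.head h)
  | [a], _ => by simp [chainWeight]
  | a :: b :: t, _ => by
    rw [cw_cons, cw_tele f (b :: t) (List.cons_ne_nil _ _), List.getLast_cons_cons]
    simp only [List.head_cons]
    ring

lemma cw_parity {ε : P → P → ℤ} (hε : IsSignLabeling ε) :
    ∀ (c : List P), c.Chain' (· ⋖ ·) → c ≠ [] →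
      chainWeight ε c % 2 = ((c.length : ℤ) - 1) % 2
  | [a], _, _ => by simp [chainWeight]
  | a :: b :: t, hch, _ => by
    have h := hε a b (List.isChain_cons_cons.mp hch).1
    have IH := cw_parity hε (b :: t) (List.isChain_cons_cons.mp hch).2 (List.cons_ne_nil _ _)
    rw [cw_cons]
    simp only [List.length_cons] at IH ⊢
    push_cast at IH ⊢
    rcases h with h | h <;> rw [h] <;> omega


lemma chain_snoc {x y : P} {c : List P} (hc : IsSatChainFromMinTo x c) (hxy : x ⋖ y) :
    IsSatChainFromMinTo y (c ++ [y]) := by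
  obtain ⟨⟨hcne, hcch⟩, hmin, hlast⟩ := hc
  refine ⟨⟨by simp, ?_⟩, ?_, ?_⟩
  · refine hcch.append (by simp) ?_
    intro a ha b hb
    simp only [List.head?_cons, Option.mem_def, Option.some.injEq] at hb
    rw [hlast] at ha
    simp only [Option.mem_def, Option.some.injEq] at ha
    subst ha; subst hb; exact hxy
  · rw [List.head?_append_of_ne_nil _ hcne]; exact hmin
  · simp [List.getLast?_concat]

variable [Fintype P]

lemma exists_covby_below {x : P} (h : ¬ IsMin x) : ∃ y, y ⋖ x := by
  obtain ⟨y₀, hy₀⟩ := not_isMin_iff.mp h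
  obtain ⟨y, hy, hmax⟩ := Set.Finite.exists_maximalFor id {z : P | z < x}
    (Set.toFinite _) ⟨y₀, hy₀⟩
  exact ⟨y, hy, fun z hyz hzx => not_le_of_gt hyz (hmax hzx hyz.le)⟩

lemma exists_covby_above {x : P} (h : ¬ IsMax x) : ∃ y, x ⋖ y := by
  obtain ⟨y₀, hy₀⟩ := not_isMax_iff.mp h
  obtain ⟨y, hy, hmin⟩ := Set.Finite.exists_minimalFor id {z : P | x < z}
    (Set.toFinite _) ⟨y₀, hy₀⟩
  exact ⟨y, hy, fun z hxz hzy => not_le_of_gt hzy (hmin hxz hzy.le)⟩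

lemma exists_chain_to (x : P) : ∃ c : List P, IsSatChainFromMinTo x c := by
  refine (Finite.to_wellFoundedLT (α := P)).wf.induction
    (C := fun x => ∃ c : List P, IsSatChainFromMinTo x c) x ?_
  intro x IH
  by_cases hx : IsMin x
  · exact ⟨[x], ⟨by simp, List.isChain_singleton _⟩, by simpa using hx, by simp⟩
  · obtain ⟨y, hyx⟩ := exists_covby_below hx
    obtain ⟨c, hc⟩ := IH y hyx.lt
    exact ⟨c ++ [x], chain_snoc hc hyx⟩

lemma exists_chain_up (x : P) : ∃ d : List P,
    d ≠ [] ∧ d.Chain' (· ⋖ ·) ∧ d.head? = some x ∧ ∀ z ∈ d.getLast?, IsMax z := by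
  refine (Finite.to_wellFoundedGT (α := P)).wf.induction
    (C := fun x => ∃ d : List P, d ≠ [] ∧ d.Chain' (· ⋖ ·) ∧ d.head? = some x ∧ ∀ z ∈ d.getLast?, IsMax z) x ?_
  intro x IH
  by_cases hx : IsMax x
  · exact ⟨[x], by simp, List.isChain_singleton _, rfl, by simpa using hx⟩
  · obtain ⟨y, hxy⟩ := exists_covby_above hx
    obtain ⟨d, hdne, hch, hhead, hlast⟩ := IH y hxy.lt
    refine ⟨x :: d, by simp, List.isChain_cons.mpr ⟨?_, hch⟩, rfl, ?_⟩
    · intro b hb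
      rw [hhead] at hb
      simp only [Option.mem_def, Option.some.injEq] at hb
      subst hb; exact hxy
    · intro z hz
      refine hlast z ?_
      rwa [show x :: d = [x] ++ d from rfl, List.getLast?_append_of_ne_nil _ hdne] at hz

lemma glue_max {x : P} {c : List P} (hc : IsSatChainFromMinTo x c) {d : List P}
    (hdne : d ≠ []) (hdch : d.Chain' (· ⋖ ·)) (hdhead : d.head? = some x)
    (hdmax : ∀ z ∈ d.getLast?, IsMax z) :
    IsMaxChainL (c ++ d.tail) := by
  obtain ⟨⟨hcne, hcch⟩, hmin, hlast⟩ := hc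
  obtain ⟨y, t, rfl⟩ : ∃ y t, d = y :: t := by
    cases d with
    | nil => simp at hdne
    | cons y t => exact ⟨y, t, rfl⟩
  obtain rfl : x = y := by simpa using hdhead.symm
  simp only [List.tail_cons]
  refine ⟨⟨by simp [hcne], ?_⟩, ?_, ?_⟩
  · refine hcch.append hdch.tail ?_
    intro a ha b hb
    rw [hlast] at ha
    simp only [Option.mem_def, Option.some.injEq] at ha
    subst ha
    exact (List.isChain_cons.mp hdch).1 b hb
  · rw [List.head?_append_of_ne_nil _ hcne]; exact hmin
  · rcases eq_or_ne t [] with rfl | ht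
    · simp only [List.append_nil]
      intro z hz
      rw [hlast] at hz
      simp only [Option.mem_def, Option.some.injEq] at hz
      subst hz
      exact hdmax _ (by simp)
    · intro z hz
      rw [List.getLast?_append_of_ne_nil _ ht] at hz
      refine hdmax z ?_
      rwa [show x :: t = [x] ++ t from rfl, List.getLast?_append_of_ne_nil _ ht]



lemma parity_wd [Fintype P] (hP : ParityGraded P) {x : P} {c c' : List P}
    (hc : IsSatChainFromMinTo x c) (hc' : IsSatChainFromMinTo x c') :
    c.length % 2 = c'.length % 2 := by
  obtain ⟨d, hdne, hdch, hdhead, hdmax⟩ := exists_chain_up x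
  have h1 := glue_max hc hdne hdch hdhead hdmax
  have h2 := glue_max hc' hdne hdch hdhead hdmax
  have h := hP _ _ h1 h2
  simp only [List.length_append] at h
  omega

lemma construction [Fintype P] (hP : ParityGraded P) :
    ∃ ε : P → P → ℤ, IsSignLabeling ε ∧
      ∀ (x : P) (c : List P), IsSatChainFromMinTo x c →
        chainWeight ε c = (((c.length + 1) % 2 : ℕ) : ℤ) := by
  classical
  set ℓ : P → ℕ := fun x => (exists_chain_to x).choose.length with hℓ
  have hkey : ∀ (x : P) (c : List P), IsSatChainFromMinTo x c → c.length % 2 = ℓ x % 2 :=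
    fun x c hc => parity_wd hP hc (exists_chain_to x).choose_spec
  set ρ : P → ℤ := fun x => (((ℓ x + 1) % 2 : ℕ) : ℤ) with hρ
  have hρmin : ∀ x : P, IsMin x → ρ x = 0 := by
    intro x hx
    have h := hkey x [x] ⟨⟨by simp, List.isChain_singleton _⟩, by simpa using hx, by simp⟩
    simp only [List.length_singleton] at h
    simp only [hρ]
    omega
  have hcov : ∀ x y : P, x ⋖ y → ρ y - ρ x = 1 ∨ ρ y - ρ x = -1 := by
    intro x y hxy
    obtain ⟨c, hc⟩ := exists_chain_to x
    have h1 := hkey x c hc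
    have h2 := hkey y (c ++ [y]) (chain_snoc hc hxy)
    simp only [List.length_append, List.length_singleton] at h2
    simp only [hρ]
    omega
  refine ⟨fun a b => ρ b - ρ a, fun x y h => hcov x y h, ?_⟩
  intro x c hc
  obtain ⟨⟨hcne, hcch⟩, hmin, hlast⟩ := hc
  rw [cw_tele ρ c hcne]
  have hx : c.getLast hcne = x := by
    rw [List.getLast?_eq_getLast_of_ne_nil hcne] at hlast
    exact Option.some.inj hlast
  have hhead0 : ρ (c.head hcne) = 0 :=
    hρmin _ (hmin _ (by rw [List.head?_eq_head hcne]; rfl))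
  have hl := hkey x c ⟨⟨hcne, hcch⟩, hmin, hlast⟩
  rw [hx, hhead0, sub_zero]
  simp only [hρ]
  omega

lemma exists_rank [Fintype P] [Nonempty P] (hP : ParityGraded P) {ε : P → P → ℤ}
    (hw : ∀ (x : P) (c : List P), IsSatChainFromMinTo x c →
      chainWeight ε c = (((c.length + 1) % 2 : ℕ) : ℤ)) :
    ∃ r : ℤ, IsEGraded ε r := by
  obtain ⟨x₀⟩ := (inferInstance : Nonempty P)
  obtain ⟨c₀, hc₀⟩ := exists_chain_to x₀
  obtain ⟨d, hdne, hdch, hdhead, hdmax⟩ := exists_chain_up x₀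
  have hm₀ := glue_max hc₀ hdne hdch hdhead hdmax
  refine ⟨((((c₀ ++ d.tail).length + 1) % 2 : ℕ) : ℤ), ?_⟩
  intro c hc
  have hcx : IsSatChainFromMinTo (c.getLast hc.1.1) c :=
    ⟨hc.1, hc.2.1, List.getLast?_eq_getLast_of_ne_nil hc.1.1⟩
  rw [hw _ c hcx]
  have h := hP c _ hc hm₀
  norm_cast
  omega

end Aux

/-- a finite poset `P` admits a labeling `ε : E(P) → {-1,1}`
making `P` `ε`-graded if and only if `P` is parity graded; moreover, in that
case `ε` can be chosen such that the rank function (the common ε-weight of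
saturated chains from a minimal element to `x`) takes values in `{0,1}`. -/
theorem egraded_iff_parity_graded (P : Type*) [PartialOrder P] [Fintype P] [Nonempty P] :
    ((∃ ε : P → P → ℤ, IsSignLabeling ε ∧ ∃ r : ℤ, IsEGraded ε r) ↔ ParityGraded P) ∧
    (ParityGraded P → ∃ ε : P → P → ℤ, IsSignLabeling ε ∧ (∃ r : ℤ, IsEGraded ε r) ∧
      ∀ x : P, ∀ c c' : List P, IsSatChainFromMinTo x c → IsSatChainFromMinTo x c' →
        chainWeight ε c = chainWeight ε c' ∧
        (chainWeight ε c = 0 ∨ chainWeight ε c = 1)) := by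
  constructor
  · constructor
    · rintro ⟨ε, hε, r, hr⟩ c c' hc hc'
      have h1 := cw_parity hε c hc.1.2 hc.1.1
      have h2 := cw_parity hε c' hc'.1.2 hc'.1.1
      rw [hr c hc] at h1
      rw [hr c' hc'] at h2
      omega
    · intro hP
      obtain ⟨ε, hε, hw⟩ := construction hP
      exact ⟨ε, hε, exists_rank hP hw⟩
  · intro hP
    obtain ⟨ε, hε, hw⟩ := construction hP
    refine ⟨ε, hε, exists_rank hP hw, ?_⟩
    intro x c c' hc hc'
    rw [hw x c hc, hw x c' hc']
    have h := parity_wd hP hc hc'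
    constructor
    · norm_cast
      omega
    · omega
end

section
/- The n-th Eulerian polynomial A_n(x) can be written as A_n(x) = Σ_{i=0}^{⌊(n-1)/2⌋} a_{n,i} x^i (1+x)^{n-1-2i} with non-negative integers a_{n,i}. -/
open Polynomial

/-- The number of descents of a permutation of `Fin n`: indices `i` with
`π(i) > π(i+1)`. -/
noncomputable def desNum {n : ℕ} (π : Equiv.Perm (Fin n)) : ℕ :=
  Nat.card {i : Fin n // ∃ h : (i : ℕ) + 1 < n, π ⟨(i : ℕ) + 1, h⟩ < π i}

/-- The `n`-th Eulerian polynomial `A_n(x) = Σ_{π ∈ S_n} x^{des(π)}`. -/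
noncomputable def eulerianPoly (n : ℕ) : Polynomial ℤ :=
  ∑ π : Equiv.Perm (Fin n), X ^ desNum π

open Polynomial Finset

variable {N n : ℕ}

/-- descent at position `j` (as a natural number index). -/
def desProp (π : Equiv.Perm (Fin N)) (j : ℕ) : Prop :=
  ∃ h : j + 1 < N, π ⟨j + 1, h⟩ < π ⟨j, by omega⟩

instance (π : Equiv.Perm (Fin N)) : DecidablePred (desProp π) := fun _ =>
  exists_prop_decidable _

lemma desProp.bound {π : Equiv.Perm (Fin N)} {j : ℕ} (h : desProp π j) : j + 1 < N :=
  h.1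

lemma desProp_iff {π : Equiv.Perm (Fin N)} {j : ℕ} (h : j + 1 < N) :
    desProp π j ↔ π ⟨j + 1, h⟩ < π ⟨j, by omega⟩ :=
  ⟨fun ⟨_, h2⟩ => h2, fun h2 => ⟨h, h2⟩⟩

/-- the descent set as a finset of naturals. -/
def desFinset (π : Equiv.Perm (Fin N)) : Finset ℕ :=
  (Finset.range N).filter (desProp π)

lemma mem_desFinset {π : Equiv.Perm (Fin N)} {j : ℕ} :
    j ∈ desFinset π ↔ desProp π j := by
  simp only [desFinset, mem_filter, mem_range, and_iff_right_iff_imp]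
  exact fun h => by have := h.bound; omega

lemma desNum_eq (π : Equiv.Perm (Fin N)) : desNum π = (desFinset π).card := by
  rw [desNum, Nat.card_eq_fintype_card, Fintype.card_subtype]
  refine Finset.card_bij (fun a _ => (a : ℕ)) ?_ ?_ ?_
  · intro a ha
    simp only [mem_filter, mem_univ, true_and] at ha
    obtain ⟨h, hlt⟩ := ha
    exact mem_desFinset.mpr ⟨h, hlt⟩
  · intro a _ b _ h
    exact Fin.ext h
  · intro j hj
    obtain ⟨h, hlt⟩ := mem_desFinset.mp hj
    refine ⟨⟨j, by omega⟩, ?_, rfl⟩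
    simp only [mem_filter, mem_univ, true_and]
    exact ⟨h, hlt⟩

lemma desNum_le (π : Equiv.Perm (Fin N)) : desNum π ≤ N - 1 := by
  rw [desNum_eq]
  calc (desFinset π).card ≤ (Finset.range (N-1)).card := by
        apply Finset.card_le_card
        intro j hj
        have := (mem_desFinset.mp hj).bound
        simp only [mem_range]; omega
    _ = N - 1 := by simp

/-- insertion of the maximum value at position `p`. -/
def insFun (π : Equiv.Perm (Fin n)) (p : Fin (n + 1)) : Fin (n + 1) → Fin (n + 1) :=
  p.insertNth (Fin.last n) (fun i => (π i).castSucc)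

lemma insFun_apply_same (π : Equiv.Perm (Fin n)) (p : Fin (n + 1)) :
    insFun π p p = Fin.last n :=
  Fin.insertNth_apply_same p _ _

lemma insFun_apply_succAbove (π : Equiv.Perm (Fin n)) (p : Fin (n + 1)) (i : Fin n) :
    insFun π p (p.succAbove i) = (π i).castSucc :=
  Fin.insertNth_apply_succAbove p _ _ i

lemma insFun_bijective (π : Equiv.Perm (Fin n)) (p : Fin (n + 1)) :
    Function.Bijective (insFun π p) := by
  rw [Fintype.bijective_iff_injective_and_card]
  refine ⟨fun a b hab => ?_, rfl⟩
  rcases eq_or_ne a p with ha | ha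
  · rcases eq_or_ne b p with hb | hb
    · rw [ha, hb]
    · obtain ⟨i, hi⟩ := Fin.exists_succAbove_eq hb
      rw [ha, insFun_apply_same, ← hi, insFun_apply_succAbove] at hab
      exact absurd hab.symm (Fin.castSucc_lt_last (π i)).ne
  · obtain ⟨i, hi⟩ := Fin.exists_succAbove_eq ha
    rcases eq_or_ne b p with hb | hb
    · rw [hb, insFun_apply_same, ← hi, insFun_apply_succAbove] at hab
      exact absurd hab (Fin.castSucc_lt_last (π i)).ne
    · obtain ⟨i', hi'⟩ := Fin.exists_succAbove_eq hb
      rw [← hi, ← hi', insFun_apply_succAbove, insFun_apply_succAbove] at hab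
      rw [← hi, ← hi', π.injective (Fin.castSucc_injective n hab)]

/-- insertion as a permutation. -/
noncomputable def insPerm (π : Equiv.Perm (Fin n)) (p : Fin (n + 1)) :
    Equiv.Perm (Fin (n + 1)) :=
  Equiv.ofBijective _ (insFun_bijective π p)

lemma insPerm_apply (π : Equiv.Perm (Fin n)) (p : Fin (n + 1)) (j : Fin (n + 1)) :
    insPerm π p j = insFun π p j := rfl

lemma insPerm_apply_self (π : Equiv.Perm (Fin n)) (p : Fin (n + 1)) :
    insPerm π p p = Fin.last n := insFun_apply_same π p

lemma insPerm_apply_lt (π : Equiv.Perm (Fin n)) (p : Fin (n + 1)) {j : ℕ}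
    (hj : j < (p : ℕ)) (hj2 : j < n) :
    insPerm π p ⟨j, by omega⟩ = (π ⟨j, hj2⟩).castSucc := by
  have h : p.succAbove ⟨j, hj2⟩ = ⟨j, by omega⟩ := by
    rw [Fin.succAbove_of_castSucc_lt]
    · rfl
    · exact hj
  rw [insPerm_apply, ← h, insFun_apply_succAbove]

lemma insPerm_apply_gt (π : Equiv.Perm (Fin n)) (p : Fin (n + 1)) {j : ℕ}
    (hj : (p : ℕ) < j) (hj2 : j ≤ n) :
    insPerm π p ⟨j, by omega⟩ = (π ⟨j - 1, by omega⟩).castSucc := by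
  have h : p.succAbove ⟨j - 1, by omega⟩ = ⟨j, by omega⟩ := by
    rw [Fin.succAbove_of_le_castSucc]
    · ext; simp; omega
    · rw [Fin.le_castSucc_iff]
      simp [Fin.lt_iff_val_lt_val]
      omega
  rw [insPerm_apply, ← h, insFun_apply_succAbove]

lemma desProp_insPerm (π : Equiv.Perm (Fin n)) (p : Fin (n + 1)) (j : ℕ) :
    desProp (insPerm π p) j ↔
      (j = (p : ℕ) ∧ j < n) ∨ (j + 1 < (p : ℕ) ∧ desProp π j) ∨
        ((p : ℕ) < j ∧ desProp π (j - 1)) := by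
  have hpn : (p : ℕ) ≤ n := by omega
  rcases lt_trichotomy j (p : ℕ) with hj | hj | hj
  · -- j < p
    rcases eq_or_lt_of_le (Nat.succ_le_of_lt hj) with hj1 | hj1
    · -- j + 1 = p : no descent
      have h1 : j + 1 < n + 1 := by omega
      simp only [desProp_iff h1]
      have hp : (⟨j + 1, h1⟩ : Fin (n + 1)) = p := by ext; simp; omega
      rw [hp, insPerm_apply_self, insPerm_apply_lt π p hj (by omega)]
      constructor
      · intro h; exact absurd h (Fin.not_lt.mpr (Fin.le_last _))
      · intro h; omega
    · -- j + 1 < p : descent iff descent of π at j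
      have h1 : j + 1 < n + 1 := by omega
      have h2 : j + 1 < n := by omega
      simp only [desProp_iff h1]
      rw [show (⟨j+1, h1⟩ : Fin (n+1)) = ⟨j+1, by omega⟩ from rfl,
        insPerm_apply_lt π p hj1 h2, insPerm_apply_lt π p hj (by omega),
        Fin.castSucc_lt_castSucc_iff]
      rw [desProp_iff h2]
      constructor
      · intro h; right; left; exact ⟨hj1, h⟩
      · rintro (⟨h, _⟩ | ⟨_, h⟩ | ⟨h, _⟩) <;> first | exact h | omega
  · -- j = p
    constructor
    · rintro ⟨h1, hlt⟩
      left; exact ⟨hj, by omega⟩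
    · rintro (⟨_, h⟩ | ⟨h, _⟩ | ⟨h, _⟩) <;> try omega
      have h1 : j + 1 < n + 1 := by omega
      refine ⟨h1, ?_⟩
      have hp : (⟨j, by omega⟩ : Fin (n + 1)) = p := by ext; simp [hj]
      rw [hp, insPerm_apply_self]
      rw [show (⟨j+1, h1⟩ : Fin (n+1)) = ⟨j+1, by omega⟩ from rfl,
        insPerm_apply_gt π p (by omega) (by omega)]
      exact Fin.castSucc_lt_last _
  · -- j > p
    constructor
    · rintro ⟨h1, hlt⟩
      rw [show (⟨j+1, h1⟩ : Fin (n+1)) = ⟨j+1, by omega⟩ from rfl,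
        insPerm_apply_gt π p (by omega) (by omega),
        insPerm_apply_gt π p hj (by omega), Fin.castSucc_lt_castSucc_iff] at hlt
      right; right
      refine ⟨hj, ⟨by omega, ?_⟩⟩
      convert hlt using 2 <;> ext <;> simp <;> omega
    · rintro (⟨h, _⟩ | ⟨h, _⟩ | ⟨_, h⟩) <;> try omega
      obtain ⟨hb, hlt⟩ := h
      have h1 : j + 1 < n + 1 := by omega
      refine ⟨h1, ?_⟩
      rw [show (⟨j+1, h1⟩ : Fin (n+1)) = ⟨j+1, by omega⟩ from rfl,
        insPerm_apply_gt π p (by omega) (by omega),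
        insPerm_apply_gt π p hj (by omega), Fin.castSucc_lt_castSucc_iff]
      convert hlt using 2 <;> ext <;> simp <;> omega

lemma desFinset_insPerm (π : Equiv.Perm (Fin n)) (p : Fin (n + 1)) :
    desFinset (insPerm π p) =
      (if (p : ℕ) < n then {(p : ℕ)} else ∅) ∪
        (desFinset π).filter (fun i => i + 1 < (p : ℕ)) ∪
          ((desFinset π).filter (fun i => (p : ℕ) ≤ i)).image (· + 1) := by
  ext j
  rw [mem_desFinset, desProp_insPerm]
  simp only [Finset.mem_union, Finset.mem_filter, Finset.mem_image, mem_desFinset]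
  constructor
  · rintro (⟨h1, h2⟩ | ⟨h1, h2⟩ | ⟨h1, h2⟩)
    · left; left; rw [if_pos (h1 ▸ h2)]; simp [h1]
    · left; right; exact ⟨h2, h1⟩
    · right; exact ⟨j - 1, ⟨h2, by omega⟩, by omega⟩
  · rintro ((h | ⟨h1, h2⟩) | ⟨i, ⟨h1, h2⟩, h3⟩)
    · split_ifs at h with hq
      · simp only [Finset.mem_singleton] at h
        exact Or.inl ⟨h, h ▸ hq⟩
      · simp at h
    · exact Or.inr (Or.inl ⟨h2, h1⟩)
    · exact Or.inr (Or.inr ⟨by omega, by simpa [show j - 1 = i by omega] using h1⟩)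

lemma desNum_insPerm (π : Equiv.Perm (Fin n)) (p : Fin (n + 1)) :
    desNum (insPerm π p) = desNum π +
      (if ((p : ℕ) = n ∨ ((p : ℕ) ≠ 0 ∧ desProp π ((p : ℕ) - 1))) then 0 else 1) := by
  classical
  set q := (p : ℕ) with hq
  have hqn : q ≤ n := by omega
  set F := desFinset π with hF
  set S0 : Finset ℕ := (if q < n then {q} else ∅) with hS0def
  set S1 : Finset ℕ := F.filter (fun i => i + 1 < q) with hS1def
  set S2 : Finset ℕ := (F.filter (fun i => q ≤ i)).image (· + 1) with hS2def
  have hd1 : Disjoint (S0 ∪ S1) S2 := by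
    rw [Finset.disjoint_left]
    intro a ha ha2
    simp only [hS2def, Finset.mem_image, Finset.mem_filter] at ha2
    obtain ⟨i, ⟨hi1, hi2⟩, rfl⟩ := ha2
    rcases Finset.mem_union.mp ha with h | h
    · rw [hS0def] at h
      split_ifs at h with hc
      · simp only [Finset.mem_singleton] at h; omega
      · simp at h
    · rw [hS1def, Finset.mem_filter] at h; omega
  have hd0 : Disjoint S0 S1 := by
    rw [Finset.disjoint_left]
    intro a ha ha1
    rw [hS0def] at ha
    split_ifs at ha with hc
    · simp only [Finset.mem_singleton] at ha
      rw [hS1def, Finset.mem_filter] at ha1; omega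
    · simp at ha
  have hcard : desNum (insPerm π p) = S0.card + S1.card + S2.card := by
    rw [desNum_eq, desFinset_insPerm, Finset.card_union_of_disjoint hd1,
      Finset.card_union_of_disjoint hd0]
  have hS0 : S0.card = if q < n then 1 else 0 := by
    rw [hS0def]; split_ifs <;> simp
  have hS2 : S2.card = (F.filter (fun i => q ≤ i)).card :=
    Finset.card_image_of_injective _ (fun a b => by omega)
  have hpart : (F.filter (fun i => ¬(i + 1 = q))).card
      = S1.card + (F.filter (fun i => q ≤ i)).card := by
    have hset : F.filter (fun i => ¬(i + 1 = q))
        = (F.filter (fun i => i + 1 < q)) ∪ (F.filter (fun i => q ≤ i)) := by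
      rw [← Finset.filter_or]
      exact Finset.filter_congr (fun x _ => by constructor <;> intro <;> omega)
    rw [hset, Finset.card_union_of_disjoint, hS1def]
    rw [Finset.disjoint_left]
    intro a ha hb
    simp only [Finset.mem_filter] at ha hb; omega
  have hCpart : (F.filter (fun i => i + 1 = q)).card
      + (F.filter (fun i => ¬(i + 1 = q))).card = F.card :=
    Finset.card_filter_add_card_filter_not (s := F) (p := fun i => i + 1 = q)
  have hEq : (F.filter (fun i => i + 1 = q)).card
      = if (q ≠ 0 ∧ desProp π (q - 1)) then 1 else 0 := by
    split_ifs with hc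
    · rw [show F.filter (fun i => i + 1 = q) = {q - 1} from ?_, Finset.card_singleton]
      ext a
      simp only [Finset.mem_filter, Finset.mem_singleton, hF, mem_desFinset]
      constructor
      · rintro ⟨_, h⟩; omega
      · rintro rfl; exact ⟨hc.2, by omega⟩
    · rw [show F.filter (fun i => i + 1 = q) = ∅ from ?_, Finset.card_empty]
      ext a
      simp only [Finset.mem_filter, Finset.notMem_empty, iff_false, not_and, hF,
        mem_desFinset]
      intro ha hb
      exact hc ⟨by omega, by rwa [show q - 1 = a by omega]⟩
  have himp : (q ≠ 0 ∧ desProp π (q - 1)) → q < n := by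
    rintro ⟨h0, hd⟩
    have := hd.bound; omega
  have hdn : desNum π = F.card := desNum_eq π
  rw [hcard, hS0, hS2, hdn]
  by_cases hm : q ≠ 0 ∧ desProp π (q - 1)
  · rw [if_pos hm] at hEq
    rw [if_pos (Or.inr hm), if_pos (himp hm)]
    omega
  · rw [if_neg hm] at hEq
    by_cases hqe : q = n
    · rw [if_pos (Or.inl hqe), if_neg (by omega)]
      omega
    · rw [if_neg (not_or.mpr ⟨hqe, hm⟩), if_pos (by omega)]
      omega

lemma card_P (π : Equiv.Perm (Fin n)) :
    ((Finset.range (n + 1)).filter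
      (fun q => q = n ∨ (q ≠ 0 ∧ desProp π (q - 1)))).card = desNum π + 1 := by
  classical
  have hset : (Finset.range (n + 1)).filter
      (fun q => q = n ∨ (q ≠ 0 ∧ desProp π (q - 1)))
      = insert n ((desFinset π).image (· + 1)) := by
    ext q
    simp only [Finset.mem_filter, Finset.mem_range, Finset.mem_insert, Finset.mem_image,
      mem_desFinset]
    constructor
    · rintro ⟨hq, rfl | ⟨h0, hd⟩⟩
      · exact Or.inl rfl
      · exact Or.inr ⟨q - 1, hd, by omega⟩
    · rintro (rfl | ⟨i, hd, rfl⟩)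
      · exact ⟨by omega, Or.inl rfl⟩
      · have := hd.bound
        exact ⟨by omega, Or.inr ⟨by omega, by simpa [show i + 1 - 1 = i by omega] using hd⟩⟩
  rw [hset, Finset.card_insert_of_notMem, Finset.card_image_of_injective _
    (fun a b => by omega), ← desNum_eq]
  simp only [Finset.mem_image, mem_desFinset, not_exists]
  intro i hd
  have := hd.1.bound; omega

lemma sum_insPerm (π : Equiv.Perm (Fin n)) :
    ∑ p : Fin (n + 1), (X : Polynomial ℤ) ^ desNum (insPerm π p)
      = C ((desNum π + 1 : ℕ) : ℤ) * X ^ desNum π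
        + C ((n - desNum π : ℕ) : ℤ) * X ^ (desNum π + 1) := by
  classical
  have h1 : ∀ p : Fin (n + 1), (X : Polynomial ℤ) ^ desNum (insPerm π p)
      = (fun q : ℕ => if (q = n ∨ (q ≠ 0 ∧ desProp π (q - 1))) then
          (X : Polynomial ℤ) ^ desNum π else X ^ (desNum π + 1)) (p : ℕ) := by
    intro p
    rw [desNum_insPerm]
    simp only [ne_eq]
    split_ifs <;> simp
  have h2 : ∑ p : Fin (n + 1), (X : Polynomial ℤ) ^ desNum (insPerm π p)
      = ∑ q ∈ Finset.range (n + 1),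
          (if (q = n ∨ (q ≠ 0 ∧ desProp π (q - 1))) then
            (X : Polynomial ℤ) ^ desNum π else X ^ (desNum π + 1)) := by
    rw [← Fin.sum_univ_eq_sum_range]
    exact Finset.sum_congr rfl (fun p _ => h1 p)
  rw [h2, Finset.sum_ite, Finset.sum_const, Finset.sum_const, card_P]
  have hle : desNum π + 1 ≤ n + 1 := by
    have := card_P π
    have h2 := Finset.card_filter_le (Finset.range (n + 1))
      (fun q => q = n ∨ (q ≠ 0 ∧ desProp π (q - 1)))
    rw [this] at h2
    simpa using h2
  have hneg : ((Finset.range (n + 1)).filter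
      (fun q => ¬(q = n ∨ (q ≠ 0 ∧ desProp π (q - 1))))).card = n - desNum π := by
    have := Finset.card_filter_add_card_filter_not
      (s := Finset.range (n + 1)) (p := fun q => q = n ∨ (q ≠ 0 ∧ desProp π (q - 1)))
    rw [card_P] at this
    simp only [Finset.card_range] at this
    omega
  rw [hneg]
  simp only [nsmul_eq_mul, Polynomial.C_eq_natCast]

lemma insPerm_bijective :
    Function.Bijective (fun x : Equiv.Perm (Fin n) × Fin (n + 1) => insPerm x.1 x.2) := by
  classical
  rw [Fintype.bijective_iff_injective_and_card]
  constructor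
  · rintro ⟨π, p⟩ ⟨π', p'⟩ h
    simp only at h
    have hp : p = p' := by
      by_contra hne
      have h1 : insPerm π p p = Fin.last n := insPerm_apply_self π p
      have h2 : insPerm π' p' p = insPerm π p p := by rw [h]
      obtain ⟨i, hi⟩ := Fin.exists_succAbove_eq hne
      rw [h1, ← hi, insPerm_apply, insFun_apply_succAbove] at h2
      exact absurd h2 (Fin.castSucc_lt_last (π' i)).ne
    subst hp
    have hπ : π = π' := by
      ext i
      have h2 : insPerm π p (p.succAbove i) = insPerm π' p (p.succAbove i) := by rw [h]
      rw [insPerm_apply, insPerm_apply, insFun_apply_succAbove, insFun_apply_succAbove] at h2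
      exact congrArg Fin.val (Fin.castSucc_injective n h2)
    rw [hπ]
  · simp only [Fintype.card_prod, Fintype.card_perm, Fintype.card_fin]
    rw [Nat.factorial_succ, mul_comm]

lemma euler_rec (n : ℕ) :
    eulerianPoly (n + 1) = (1 + C (n : ℤ) * X) * eulerianPoly n
      + X * (1 - X) * derivative (eulerianPoly n) := by
  classical
  rw [eulerianPoly, ← Function.Bijective.sum_comp insPerm_bijective (fun σ => X ^ desNum σ),
    Fintype.sum_prod_type]
  simp only [sum_insPerm]
  rw [eulerianPoly, derivative_sum, Finset.mul_sum, Finset.mul_sum, ← Finset.sum_add_distrib]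
  apply Finset.sum_congr rfl
  intro π _
  have hk : desNum π ≤ n := by
    have := desNum_le π; omega
  rw [derivative_X_pow, Nat.cast_add, Nat.cast_one, Nat.cast_sub hk, map_add, map_sub,
    map_one]
  rcases Nat.eq_zero_or_pos (desNum π) with h0 | h0
  · rw [h0]; simp
  · obtain ⟨j, hj⟩ := Nat.exists_eq_succ_of_ne_zero (by omega : desNum π ≠ 0)
    rw [hj]
    simp only [Nat.succ_sub_one, Nat.cast_succ, Nat.succ_eq_add_one]
    ring

lemma keylemma (i e : ℕ) (c : ℤ) :
    (1 + C ((2 * i + e + 1 : ℕ) : ℤ) * X) * (C c * X ^ i * (1 + X) ^ e)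
      + X * (1 - X) * derivative (C c * X ^ i * (1 + X) ^ e)
    = C (c * ((i : ℤ) + 1)) * X ^ i * (1 + X) ^ (e + 1)
      + C (c * (2 * (e : ℤ))) * X ^ (i + 1) * (1 + X) ^ (e - 1) := by
  have hd : derivative (C c * X ^ i * (1 + X) ^ e : Polynomial ℤ)
      = C c * (C (i : ℤ) * X ^ (i - 1)) * (1 + X) ^ e
        + C c * X ^ i * (C (e : ℤ) * (1 + X) ^ (e - 1)) := by
    rw [derivative_mul, derivative_mul, derivative_C, derivative_X_pow, derivative_pow,
      derivative_add, derivative_one, derivative_X]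
    ring
  rw [hd]
  rcases Nat.eq_zero_or_pos i with hi | hi
  · rcases Nat.eq_zero_or_pos e with he | he
    · subst hi; subst he
      simp only [pow_zero, Nat.zero_sub, Nat.cast_zero, map_zero, Nat.cast_one,
        Nat.cast_add, Nat.cast_mul, Nat.cast_ofNat, map_add, map_mul, map_one, map_ofNat]
      ring
    · obtain ⟨f, rfl⟩ := Nat.exists_eq_succ_of_ne_zero (by omega : e ≠ 0)
      subst hi
      simp only [Nat.succ_sub_one, Nat.succ_eq_add_one, Nat.cast_zero, Nat.cast_one,
        Nat.cast_add, Nat.cast_mul, Nat.cast_ofNat, map_zero, map_add, map_mul, map_one,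
        map_ofNat]
      ring
  · obtain ⟨j, rfl⟩ := Nat.exists_eq_succ_of_ne_zero (by omega : i ≠ 0)
    rcases Nat.eq_zero_or_pos e with he | he
    · subst he
      simp only [Nat.succ_sub_one, Nat.succ_eq_add_one, Nat.cast_zero, Nat.cast_one,
        Nat.cast_add, Nat.cast_mul, Nat.cast_ofNat, map_zero, map_add, map_mul, map_one,
        map_ofNat]
      ring
    · obtain ⟨f, rfl⟩ := Nat.exists_eq_succ_of_ne_zero (by omega : e ≠ 0)
      simp only [Nat.succ_sub_one, Nat.succ_eq_add_one, Nat.cast_zero, Nat.cast_one,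
        Nat.cast_add, Nat.cast_mul, Nat.cast_ofNat, map_zero, map_add, map_mul, map_one,
        map_ofNat]
      ring

lemma gamma_aux : ∀ n : ℕ, 1 ≤ n → ∃ γ : ℕ → ℕ, (∀ i, n - 1 < 2 * i → γ i = 0) ∧
    eulerianPoly n
      = ∑ i ∈ Finset.range n, C ((γ i : ℤ)) * X ^ i * (1 + X) ^ (n - 1 - 2 * i) := by
  intro n hn'
  induction n, hn' using Nat.le_induction with
  | base =>
    refine ⟨fun i => if i = 0 then 1 else 0, fun i hi => if_neg (by omega), ?_⟩
    have hdes : ∀ π : Equiv.Perm (Fin 1), desNum π = 0 := by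
      intro π
      rw [desNum_eq, Finset.card_eq_zero]
      ext j
      simp only [mem_desFinset, Finset.notMem_empty, iff_false]
      intro h
      have := h.bound; omega
    rw [eulerianPoly]
    simp only [hdes, pow_zero]
    rw [Finset.sum_const, Finset.card_univ, Fintype.card_perm, Fintype.card_fin]
    simp
  | succ n hn ih =>
    obtain ⟨γ, hsupp, hA⟩ := ih
    set γ' : ℕ → ℕ := fun j => if j = 0 then γ 0
      else (j + 1) * γ j + 2 * (n - 1 - 2 * (j - 1)) * γ (j - 1) with hγ'def
    have hγ'zero : γ' 0 = γ 0 := if_pos rfl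
    have hγ'succ : ∀ i, γ' (i + 1) = (i + 1 + 1) * γ (i + 1) + 2 * (n - 1 - 2 * i) * γ i := by
      intro i
      rw [hγ'def]
      simp only [Nat.succ_ne_zero, if_false, Nat.add_sub_cancel]
    refine ⟨γ', ?_, ?_⟩
    · intro j hj
      rcases Nat.eq_zero_or_pos j with rfl | hj0
      · omega
      · obtain ⟨k, rfl⟩ := Nat.exists_eq_succ_of_ne_zero (by omega : j ≠ 0)
        rw [hγ'succ k, hsupp (k + 1) (by omega), show n - 1 - 2 * k = 0 by omega]
        ring
    · rw [euler_rec, hA, derivative_sum, Finset.mul_sum, Finset.mul_sum,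
        ← Finset.sum_add_distrib]
      have hterm : ∀ i ∈ Finset.range n,
          (1 + C (n : ℤ) * X) * (C ((γ i : ℕ) : ℤ) * X ^ i * (1 + X) ^ (n - 1 - 2 * i))
            + X * (1 - X) * derivative (C ((γ i : ℕ) : ℤ) * X ^ i * (1 + X) ^ (n - 1 - 2 * i))
          = C ((γ i : ℤ) * ((i : ℤ) + 1)) * X ^ i * (1 + X) ^ (n - 2 * i)
            + C ((γ i : ℤ) * (2 * ((n - 1 - 2 * i : ℕ) : ℤ))) * X ^ (i + 1)
              * (1 + X) ^ (n - 1 - 2 * i - 1) := by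
        intro i _
        by_cases hγ : γ i = 0
        · simp [hγ]
        · have h2i : 2 * i ≤ n - 1 := by
            by_contra hc
            exact hγ (hsupp i (by omega))
          have hkey := keylemma i (n - 1 - 2 * i) ((γ i : ℕ) : ℤ)
          rw [show 2 * i + (n - 1 - 2 * i) + 1 = n by omega] at hkey
          rw [hkey, show n - 1 - 2 * i + 1 = n - 2 * i by omega]
      rw [Finset.sum_congr rfl hterm, Finset.sum_add_distrib]
      have hAn : C ((γ n : ℤ) * ((n : ℤ) + 1)) * X ^ n * (1 + X) ^ (n - 2 * n) = 0 := by
        rw [hsupp n (by omega)]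
        simp
      have hsplit : ∑ i ∈ Finset.range n,
          C ((γ i : ℤ) * ((i : ℤ) + 1)) * X ^ i * (1 + X) ^ (n - 2 * i)
          = ∑ i ∈ Finset.range (n + 1),
            C ((γ i : ℤ) * ((i : ℤ) + 1)) * X ^ i * (1 + X) ^ (n - 2 * i) := by
        rw [Finset.sum_range_succ, hAn, add_zero]
      rw [hsplit, Finset.sum_range_succ' (fun i =>
        C ((γ i : ℤ) * ((i : ℤ) + 1)) * X ^ i * (1 + X) ^ (n - 2 * i)) n]
      rw [show (∑ i ∈ Finset.range (n + 1),
          C ((γ' i : ℕ) : ℤ) * X ^ i * (1 + X) ^ (n + 1 - 1 - 2 * i))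
        = (∑ i ∈ Finset.range n,
            C ((γ' (i + 1) : ℕ) : ℤ) * X ^ (i + 1) * (1 + X) ^ (n + 1 - 1 - 2 * (i + 1)))
          + C ((γ' 0 : ℕ) : ℤ) * X ^ 0 * (1 + X) ^ (n + 1 - 1 - 2 * 0) from
        Finset.sum_range_succ' _ n]
      rw [add_right_comm]
      congr 1
      · rw [← Finset.sum_add_distrib]
        apply Finset.sum_congr rfl
        intro i _
        rw [hγ'succ i, show n + 1 - 1 - 2 * (i + 1) = n - 1 - 2 * i - 1 by omega,
          show n - 2 * (i + 1) = n - 1 - 2 * i - 1 by omega]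
        rw [← add_mul, ← add_mul, ← C_add]
        congr 2
        push_cast
        ring
      · rw [hγ'zero]
        simp only [pow_zero, mul_one, Nat.mul_zero, Nat.sub_zero, Nat.add_sub_cancel]
        congr 1
        push_cast
        ring

/-- the Eulerian polynomial can be written as
`A_n(x) = Σ_{i=0}^{⌊(n-1)/2⌋} a_{n,i} x^i (1+x)^{n-1-2i}` with non-negative
integers `a_{n,i}`. -/
theorem eulerian_gamma_expansion (n : ℕ) (hn : 1 ≤ n) :
    ∃ a : ℕ → ℕ, eulerianPoly n =
      ∑ i ∈ Finset.range ((n - 1) / 2 + 1),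
        C (a i : ℤ) * X ^ i * (1 + X) ^ (n - 1 - 2 * i) := by
  obtain ⟨γ, hsupp, hA⟩ := gamma_aux n hn
  refine ⟨γ, ?_⟩
  rw [hA]
  symm
  apply Finset.sum_subset
  · intro i hi
    simp only [Finset.mem_range] at hi ⊢
    have := Nat.div_le_self (n - 1) 2
    omega
  · intro i _ hi
    simp only [Finset.mem_range, not_lt] at hi
    have h2 : n - 1 < 2 * i := by
      have := (Nat.div_lt_iff_lt_mul (by norm_num : 0 < 2)).mp
        (by omega : (n - 1) / 2 < i)
      omega
    rw [hsupp i h2]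
    simp
end

section
/- For any labeled poset (P,ω) with p elements, the map Φ defined by Φσ = σ + δ_ε, where δ_ε(x) is the maximum ε-weight of a saturated chain from x to a maximal element, is an injection from the set of (P,ε)-partitions with largest part at most n into the set of (P,-ε)-partitions with largest part at most n + r(ε), where r(ε) is the maximum ε-weight over all maximal chains. -/
open Polynomial

variable {P : Type*}

/-- A saturated chain starting at `x` and ending at a maximal element. -/
def IsSatChainFromToMax [PartialOrder P] (x : P) (c : List P) : Prop :=
  IsSatChain c ∧ c.head? = some x ∧ (∀ y ∈ c.getLast?, IsMax y)

section Aux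

variable [PartialOrder P]

/-- If `x ⋖ y`, then `δ x ≥ ε x y + δ y`. -/
lemma delta_cover (ε : P → P → ℤ) (δ : P → ℤ)
    (hδ : ∀ x : P, IsGreatest {w : ℤ | ∃ c : List P, IsSatChainFromToMax x c ∧
      chainWeight ε c = w} (δ x)) {x y : P} (hxy : x ⋖ y) :
    ε x y + δ y ≤ δ x := by
  obtain ⟨c, ⟨⟨hne, hch⟩, hhd, hlast⟩, hw⟩ := (hδ y).1
  obtain ⟨c', rfl⟩ : ∃ c', c = y :: c' := by
    cases c with
    | nil => exact absurd rfl hne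
    | cons a c' =>
      obtain rfl : a = y := by simpa using hhd
      exact ⟨c', rfl⟩
  refine (hδ x).2 ⟨x :: y :: c', ⟨⟨by simp, List.isChain_cons_cons.mpr ⟨hxy, hch⟩⟩,
    rfl, by simpa using hlast⟩, ?_⟩
  simp only [chainWeight, List.zip_cons_cons, List.tail_cons, List.map_cons, List.sum_cons]
  rw [← hw]; rfl

/-- `δ` of a maximal element is `0`. -/
lemma delta_max (ε : P → P → ℤ) (δ : P → ℤ)
    (hδ : ∀ x : P, IsGreatest {w : ℤ | ∃ c : List P, IsSatChainFromToMax x c ∧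
      chainWeight ε c = w} (δ x)) {m : P} (hm : IsMax m) : δ m = 0 := by
  have h0 : (0 : ℤ) ∈ {w : ℤ | ∃ c : List P, IsSatChainFromToMax m c ∧
      chainWeight ε c = w} := by
    exact ⟨[m], ⟨⟨by simp, List.isChain_singleton _⟩, rfl, by simpa using hm⟩, by simp [chainWeight]⟩
  have hle : δ m ≤ 0 := by
    obtain ⟨c, ⟨⟨hne, hch⟩, hhd, _⟩, hw⟩ := (hδ m).1
    cases c with
    | nil => exact absurd rfl hne
    | cons a c' =>
      obtain rfl : a = m := by simpa using hhd
      cases c' with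
      | nil => simp [chainWeight] at hw; omega
      | cons b c'' =>
        exact absurd (List.isChain_cons_cons.mp hch).1.lt (isMax_iff_forall_not_lt.mp hm _)
  exact le_antisymm hle ((hδ m).2 h0)

end Aux

/-- for a labeled poset `(P,ε)`, with `δ(x)` the maximum
ε-weight of a saturated chain from `x` to a maximal element and `r(ε)` the
maximum ε-weight of a maximal chain, the map `Φσ = σ + δ` is an injection of
the set of `(P,ε)`-partitions with largest part at most `n` into the set of
`(P,-ε)`-partitions with largest part at most `n + r(ε)`. -/
theorem Phi_injection {P : Type*} [PartialOrder P] [Fintype P] [Nonempty P]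
    (ε : P → P → ℤ) (hsign : IsSignLabeling ε)
    (δ : P → ℤ)
    (hδ : ∀ x : P, IsGreatest {w : ℤ | ∃ c : List P, IsSatChainFromToMax x c ∧
      chainWeight ε c = w} (δ x))
    (r : ℤ)
    (hr : IsGreatest {w : ℤ | ∃ c : List P, IsMaxChainL c ∧ chainWeight ε c = w} r)
    (n : ℕ) :
    (∀ σ : P → ℤ, IsPPartition ε σ → (∀ x, σ x ≤ (n : ℤ)) →
      IsPPartition (fun x y => -ε x y) (fun x => σ x + δ x) ∧
      (∀ x, σ x + δ x ≤ (n : ℤ) + r)) ∧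
    Set.InjOn (fun (σ : P → ℤ) => fun x => σ x + δ x)
      {σ : P → ℤ | IsPPartition ε σ ∧ ∀ x, σ x ≤ (n : ℤ)} := by
  constructor
  · intro σ hσ hσn
    obtain ⟨hpos, hanti, hstrict⟩ := hσ
    set τ : P → ℤ := fun x => σ x + δ x with hτ
    -- monotonicity on covers
    have hcov : ∀ x y : P, x ⋖ y → τ y ≤ τ x ∧ (ε x y = 1 → τ y < τ x) := by
      intro x y hxy
      have hd := delta_cover ε δ hδ hxy
      rcases hsign x y hxy with h1 | h1
      · have := hanti x y hxy.le
        constructor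
        · simp only [hτ]; omega
        · intro _; simp only [hτ]; omega
      · have := hstrict x y hxy h1
        constructor
        · simp only [hτ]; omega
        · intro h; omega
    -- τ is antitone
    have hτanti : ∀ x : P, ∀ y, x ≤ y → τ y ≤ τ x := fun x =>
      wellFounded_gt.induction (C := fun x => ∀ y, x ≤ y → τ y ≤ τ x) x (by
        intro x ih y hxy
        rcases eq_or_lt_of_le hxy with rfl | hlt
        · exact le_refl _
        · obtain ⟨z, hz, hzy⟩ := exists_covBy_le_of_lt hlt
          exact (ih z hz.lt y hzy).trans (hcov x z hz).1)
    -- positivity of τ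
    have hτpos : ∀ x : P, 1 ≤ τ x := fun x =>
      wellFounded_gt.induction (C := fun x => 1 ≤ τ x) x (by
        intro x ih
        by_cases hx : IsMax x
        · have : δ x = 0 := delta_max ε δ hδ hx
          simp only [hτ, this, add_zero]; exact hpos x
        · obtain ⟨y, hy⟩ := exists_covBy_of_wellFoundedLT hx
          exact le_trans (ih y hy.lt) (hcov x y hy).1)
    -- upper bound for τ
    have hτub : ∀ x : P, τ x ≤ (n : ℤ) + r := fun x =>
      wellFounded_lt.induction (C := fun x => τ x ≤ (n : ℤ) + r) x (by
        intro x ih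
        by_cases hx : IsMin x
        · obtain ⟨c, ⟨hsat, hhd, hlast⟩, hw⟩ := (hδ x).1
          have hmax : IsMaxChainL c := ⟨hsat, fun a ha => by
            rw [hhd] at ha; simp at ha; exact ha ▸ hx, hlast⟩
          have : δ x ≤ r := hw ▸ hr.2 ⟨c, hmax, rfl⟩
          have := hσn x
          simp only [hτ]; omega
        · obtain ⟨y, hy⟩ := exists_covBy_of_wellFoundedGT hx
          have hyx := ih y hy.lt
          have hd := delta_cover ε δ hδ hy
          rcases hsign y x hy with h1 | h1
          · have := hanti y x hy.le
            simp only [hτ] at hyx ⊢; omega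
          · have := hstrict y x hy h1
            simp only [hτ] at hyx ⊢; omega)
    refine ⟨⟨hτpos, fun x y hxy => hτanti x y hxy, ?_⟩, hτub⟩
    · intro x y hxy hneg
      have : ε x y = 1 := by
        rcases hsign x y hxy with h | h
        · exact h
        · simp [h] at hneg
      exact (hcov x y hxy).2 this
  · intro σ₁ _ σ₂ _ h
    funext x
    have := congrFun h x
    simpa using this
end

section
/- For a labeled poset (P,ε), the map Φ_ε(σ) = σ + δ_ε is a bijection from (P,ε)-partitions to (P,-ε)-partitions if and only if P is dual ε-consistent, i.e., for every covering relation (x,y) ∈ E(P), δ_ε(x) = δ_ε(y) + ε(x,y). -/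
open Polynomial

variable {P : Type*}

namespace PhiAux
variable {P : Type*} [PartialOrder P]

lemma chainWeight_nil (g : P → P → ℤ) : chainWeight g [] = 0 := by simp [chainWeight]

lemma chainWeight_singleton (g : P → P → ℤ) (a : P) : chainWeight g [a] = 0 := by
  simp [chainWeight]

lemma chainWeight_cons_cons (g : P → P → ℤ) (x y : P) (t : List P) :
    chainWeight g (x :: y :: t) = g x y + chainWeight g (y :: t) := by
  simp [chainWeight]

lemma chainWeight_pair (g : P → P → ℤ) (a b : P) : chainWeight g [a, b] = g a b := by
  simp [chainWeight]

lemma chain_le (g : P → P → ℤ) (f : P → ℤ)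
    (hf : ∀ u v : P, u ⋖ v → f v ≤ f u + g u v) :
    ∀ c : List P, c.Chain' (· ⋖ ·) → ∀ x ∈ c.head?, ∀ y ∈ c.getLast?,
      f y ≤ f x + chainWeight g c := by
  intro c
  induction c with
  | nil => simp
  | cons a t ih =>
    cases t with
    | nil =>
      intro _ x hx y hy
      simp only [List.head?_cons, Option.mem_def, Option.some.injEq] at hx
      simp only [List.getLast?_singleton, Option.mem_def, Option.some.injEq] at hy
      subst hx; subst hy; simp [chainWeight_singleton]
    | cons b t' =>
      intro hc x hx y hy
      simp only [List.head?_cons, Option.mem_def, Option.some.injEq] at hx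
      subst hx
      simp only [List.Chain', List.isChain_cons_cons] at hc
      rw [List.getLast?_cons_cons] at hy
      have h1 := ih hc.2 b (by simp) y hy
      have h2 := hf _ _ hc.1
      rw [chainWeight_cons_cons]
      omega

lemma chainWeight_le_length (g : P → P → ℤ) (hg : ∀ u v : P, u ⋖ v → g u v ≤ 1) :
    ∀ c : List P, c.Chain' (· ⋖ ·) → chainWeight g c ≤ (c.length : ℤ) := by
  intro c
  induction c with
  | nil => simp [chainWeight_nil]
  | cons a t ih =>
    cases t with
    | nil => simp [chainWeight_singleton]
    | cons b t' =>
      intro hc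
      simp only [List.Chain', List.isChain_cons_cons] at hc
      have h1 := ih hc.2
      have h2 := hg _ _ hc.1
      rw [chainWeight_cons_cons]
      simp only [List.length_cons] at *
      push_cast
      push_cast at h1
      omega

lemma chainWeight_nonneg (g : P → P → ℤ) (hg : ∀ u v : P, u ⋖ v → 0 ≤ g u v) :
    ∀ c : List P, c.Chain' (· ⋖ ·) → 0 ≤ chainWeight g c := by
  intro c
  induction c with
  | nil => simp [chainWeight_nil]
  | cons a t ih =>
    cases t with
    | nil => simp [chainWeight_singleton]
    | cons b t' =>
      intro hc
      simp only [List.Chain', List.isChain_cons_cons] at hc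
      have h1 := ih hc.2
      have h2 := hg _ _ hc.1
      rw [chainWeight_cons_cons]
      omega

lemma chainWeight_neg (g : P → P → ℤ) (c : List P) :
    chainWeight (fun u v => -g u v) c = -chainWeight g c := by
  unfold chainWeight
  induction (c.zip c.tail) with
  | nil => simp
  | cons q t ih => simp [ih]; ring

lemma head_le_getLast :
    ∀ c : List P, c.Chain' (· ⋖ ·) → ∀ x ∈ c.head?, ∀ y ∈ c.getLast?, x ≤ y := by
  intro c
  induction c with
  | nil => simp
  | cons a t ih =>
    cases t with
    | nil =>
      intro _ x hx y hy
      simp only [List.head?_cons, Option.mem_def, Option.some.injEq] at hx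
      simp only [List.getLast?_singleton, Option.mem_def, Option.some.injEq] at hy
      subst hx; subst hy; exact le_rfl
    | cons b t' =>
      intro hc x hx y hy
      simp only [List.head?_cons, Option.mem_def, Option.some.injEq] at hx
      subst hx
      simp only [List.Chain', List.isChain_cons_cons] at hc
      rw [List.getLast?_cons_cons] at hy
      exact le_trans hc.1.le (ih hc.2 b (by simp) y hy)

lemma chain_self {b : P} : ∀ {c : List P}, c.Chain' (· ⋖ ·) → c.head? = some b →
    c.getLast? = some b → c = [b] := by
  intro c hc hh hl
  cases c with
  | nil => simp at hh
  | cons v t =>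
    cases t with
    | nil => simp_all
    | cons y t' =>
      simp only [List.head?_cons, Option.some.injEq] at hh
      simp only [List.Chain', List.isChain_cons_cons] at hc
      rw [List.getLast?_cons_cons] at hl
      have hy : y ≤ b := head_le_getLast (y :: t') hc.2 y (by simp) b hl
      have hvy : v ⋖ y := hc.1
      rw [hh] at hvy
      exact absurd (lt_of_lt_of_le hvy.lt hy) (lt_irrefl b)

lemma chain_eq_pair {a b : P} (hab : a ⋖ b) {c : List P} (hc : c.Chain' (· ⋖ ·))
    (hh : c.head? = some a) (hl : c.getLast? = some b) : c = [a, b] := by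
  cases c with
  | nil => simp at hh
  | cons v t =>
    cases t with
    | nil =>
      simp only [List.head?_cons, Option.some.injEq] at hh
      simp only [List.getLast?_singleton, Option.some.injEq] at hl
      exact absurd (hh.symm.trans hl) hab.ne
    | cons y t' =>
      simp only [List.head?_cons, Option.some.injEq] at hh
      rw [← hh] at hab ⊢
      simp only [List.Chain', List.isChain_cons_cons] at hc
      rw [List.getLast?_cons_cons] at hl
      have hy : y ≤ b := head_le_getLast (y :: t') hc.2 y (by simp) b hl
      have hyb : y = b := by
        rcases lt_or_eq_of_le hy with h | h
        · exact absurd h (hab.2 hc.1.lt)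
        · exact h
      subst hyb
      have := chain_self hc.2 (by simp) hl
      rw [this]

lemma satChain_length_le [Fintype P] (c : List P) (hc : c.Chain' (· ⋖ ·)) :
    c.length ≤ Fintype.card P := by
  have h1 : c.Chain' (· < ·) := List.IsChain.imp (fun a b h => h.lt) hc
  have h2 : c.Pairwise (· < ·) := List.isChain_iff_pairwise.1 h1
  have h3 : c.Nodup := h2.imp ne_of_lt
  exact h3.length_le_card

lemma exists_chain_to_max [Fintype P] : ∀ x : P, ∃ c : List P, IsSatChainFromToMax x c := by
  have wf : WellFounded ((· > ·) : P → P → Prop) := (Finite.to_wellFoundedGT).wf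
  intro x
  induction x using WellFounded.induction wf with
  | _ x ih =>
    by_cases hx : IsMax x
    · exact ⟨[x], ⟨by simp, List.isChain_singleton _⟩, by simp, by simpa⟩
    · obtain ⟨z, hz⟩ := not_isMax_iff.1 hx
      obtain ⟨y, hxy, _⟩ := exists_covBy_le_of_lt hz
      obtain ⟨c, ⟨hne, hch⟩, hh, hl⟩ := ih y hxy.lt
      cases c with
      | nil => simp at hh
      | cons b t =>
        simp only [List.head?_cons, Option.some.injEq] at hh
        refine ⟨x :: b :: t, ⟨by simp, List.isChain_cons_cons.2 ⟨hh.symm ▸ hxy, hch⟩⟩, by simp, ?_⟩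
        rwa [List.getLast?_cons_cons]

lemma exists_chain_to [Fintype P] (b : P) : ∀ x : P, x ≤ b → ∃ c : List P,
    c.Chain' (· ⋖ ·) ∧ c.head? = some x ∧ c.getLast? = some b := by
  have wf : WellFounded ((· > ·) : P → P → Prop) := (Finite.to_wellFoundedGT).wf
  intro x
  induction x using WellFounded.induction wf with
  | _ x ih =>
    intro hxb
    rcases eq_or_lt_of_le hxb with rfl | hlt
    · exact ⟨[x], List.isChain_singleton _, by simp, by simp⟩
    · obtain ⟨y, hxy, hyb⟩ := exists_covBy_le_of_lt hlt
      obtain ⟨c, hch, hh, hl⟩ := ih y hxy.lt hyb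
      cases c with
      | nil => simp at hh
      | cons b' t =>
        simp only [List.head?_cons, Option.some.injEq] at hh
        refine ⟨x :: b' :: t, List.isChain_cons_cons.2 ⟨hh.symm ▸ hxy, hch⟩, by simp, ?_⟩
        rwa [List.getLast?_cons_cons]

lemma exists_greatest_weight [Fintype P] (g : P → P → ℤ)
    (hg1 : ∀ u v : P, u ⋖ v → g u v ≤ 1) (x : P) :
    ∃ m : ℤ, IsGreatest {w : ℤ | ∃ c : List P, IsSatChainFromToMax x c ∧
      chainWeight g c = w} m := by
  obtain ⟨lub, h1, h2⟩ := Int.exists_greatest_of_bdd (P := fun w =>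
      ∃ c : List P, IsSatChainFromToMax x c ∧ chainWeight g c = w)
      ⟨(Fintype.card P : ℤ), by
        rintro w ⟨c, ⟨⟨hne, hch⟩, _, _⟩, rfl⟩
        calc chainWeight g c ≤ (c.length : ℤ) := chainWeight_le_length g hg1 c hch
        _ ≤ (Fintype.card P : ℤ) := by exact_mod_cast satChain_length_le c hch⟩
      (by obtain ⟨c, hc⟩ := exists_chain_to_max x; exact ⟨chainWeight g c, c, hc, rfl⟩)
  exact ⟨lub, h1, fun w hw => h2 w hw⟩

lemma exists_greatest_weight_to [Fintype P] (g : P → P → ℤ)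
    (hg1 : ∀ u v : P, u ⋖ v → g u v ≤ 1) (b x : P) (hxb : x ≤ b) :
    ∃ m : ℤ, IsGreatest {w : ℤ | ∃ c : List P, c.Chain' (· ⋖ ·) ∧ c.head? = some x ∧
      c.getLast? = some b ∧ chainWeight g c = w} m := by
  obtain ⟨lub, h1, h2⟩ := Int.exists_greatest_of_bdd (P := fun w =>
      ∃ c : List P, c.Chain' (· ⋖ ·) ∧ c.head? = some x ∧
        c.getLast? = some b ∧ chainWeight g c = w)
      ⟨(Fintype.card P : ℤ), by
        rintro w ⟨c, hch, _, _, rfl⟩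
        calc chainWeight g c ≤ (c.length : ℤ) := chainWeight_le_length g hg1 c hch
        _ ≤ (Fintype.card P : ℤ) := by exact_mod_cast satChain_length_le c hch⟩
      (by obtain ⟨c, h1, h2, h3⟩ := exists_chain_to b x hxb
          exact ⟨chainWeight g c, c, h1, h2, h3, rfl⟩)
  exact ⟨lub, h1, fun w hw => h2 w hw⟩

lemma cons_chain {g : P → P → ℤ} {c : List P} (hc : c.Chain' (· ⋖ ·)) {u v : P}
    (hv : c.head? = some v) (huv : u ⋖ v) :
    (u :: c).Chain' (· ⋖ ·) ∧ chainWeight g (u :: c) = g u v + chainWeight g c ∧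
      (u :: c).getLast? = c.getLast? := by
  cases c with
  | nil => simp at hv
  | cons b t =>
    simp only [List.head?_cons, Option.some.injEq] at hv
    rw [← hv] at huv ⊢
    exact ⟨List.isChain_cons_cons.2 ⟨huv, hc⟩, chainWeight_cons_cons g u b t,
      List.getLast?_cons_cons⟩

lemma greatest_step [Fintype P] (g : P → P → ℤ) {u v : P} (huv : u ⋖ v)
    {mu mv : ℤ}
    (hu : IsGreatest {w : ℤ | ∃ c : List P, IsSatChainFromToMax u c ∧
      chainWeight g c = w} mu)
    (hv : IsGreatest {w : ℤ | ∃ c : List P, IsSatChainFromToMax v c ∧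
      chainWeight g c = w} mv) :
    mv + g u v ≤ mu := by
  obtain ⟨c, ⟨⟨hne, hch⟩, hh, hl⟩, hw⟩ := hv.1
  obtain ⟨h1, h2, h3⟩ := cons_chain (g := g) hch hh huv
  refine hu.2 ⟨u :: c, ⟨⟨by simp, h1⟩, by simp, ?_⟩, ?_⟩
  · rw [h3]; exact hl
  · rw [h2, hw]; ring

lemma greatest_step_to [Fintype P] (g : P → P → ℤ) (b : P) {u v : P} (huv : u ⋖ v)
    {mu mv : ℤ}
    (hu : IsGreatest {w : ℤ | ∃ c : List P, c.Chain' (· ⋖ ·) ∧ c.head? = some u ∧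
      c.getLast? = some b ∧ chainWeight g c = w} mu)
    (hv : IsGreatest {w : ℤ | ∃ c : List P, c.Chain' (· ⋖ ·) ∧ c.head? = some v ∧
      c.getLast? = some b ∧ chainWeight g c = w} mv) :
    mv + g u v ≤ mu := by
  obtain ⟨c, hch, hh, hl, hw⟩ := hv.1
  obtain ⟨h1, h2, h3⟩ := cons_chain (g := g) hch hh huv
  refine hu.2 ⟨u :: c, h1, by simp, ?_, ?_⟩
  · rw [h3]; exact hl
  · rw [h2, hw]; ring

lemma le_step [Fintype P] (f : P → ℤ) (hf : ∀ u v : P, u ⋖ v → f v ≤ f u) :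
    ∀ x y : P, x ≤ y → f y ≤ f x := by
  have wf : WellFounded ((· > ·) : P → P → Prop) := (Finite.to_wellFoundedGT).wf
  intro x
  induction x using WellFounded.induction wf with
  | _ x ih =>
    intro y hxy
    rcases eq_or_lt_of_le hxy with rfl | hlt
    · exact le_rfl
    · obtain ⟨z, hxz, hzy⟩ := exists_covBy_le_of_lt hlt
      exact (ih z hxz.lt y hzy).trans (hf _ _ hxz)

end PhiAux

namespace PhiAux

lemma getLast?_some {α : Type*} : ∀ (c : List α), c ≠ [] → ∃ m, c.getLast? = some m
  | [a], _ => ⟨a, by simp⟩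
  | a :: b :: t, _ => by
      rw [List.getLast?_cons_cons]
      exact getLast?_some (b :: t) (by simp)

end PhiAux

/-- with `δ(x)` the maximum ε-weight of a saturated chain from
`x` to a maximal element, the map `Φ_ε(σ) = σ + δ` is a bijection from the
set of `(P,ε)`-partitions onto the set of `(P,-ε)`-partitions if and only if
`P` is dual `ε`-consistent, i.e. `δ(x) = δ(y) + ε(x,y)` for every covering
relation `x ⋖ y`. -/
theorem Phi_bijection_iff_dual_consistent {P : Type*} [PartialOrder P] [Fintype P] [Nonempty P]
    (ε : P → P → ℤ) (hsign : IsSignLabeling ε)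
    (δ : P → ℤ)
    (hδ : ∀ x : P, IsGreatest {w : ℤ | ∃ c : List P, IsSatChainFromToMax x c ∧
      chainWeight ε c = w} (δ x)) :
    Set.BijOn (fun (σ : P → ℤ) => fun x => σ x + δ x)
      {σ : P → ℤ | IsPPartition ε σ}
      {σ : P → ℤ | IsPPartition (fun x y => -ε x y) σ} ↔
    ∀ x y : P, x ⋖ y → δ x = δ y + ε x y := by
  classical
  have hge : ∀ x y : P, x ⋖ y → δ y + ε x y ≤ δ x :=
    fun x y hxy => PhiAux.greatest_step ε hxy (hδ x) (hδ y)
  constructor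
  · rintro ⟨hmaps, hinj, hsurj⟩ a b hab
    set p : P → P → ℤ := fun u v => if ε u v = 1 then 1 else 0 with hp
    have hp1 : ∀ u v : P, u ⋖ v → p u v ≤ 1 := by
      intro u v _; simp only [hp]; split <;> norm_num
    have hp0 : ∀ u v : P, u ⋖ v → 0 ≤ p u v := by
      intro u v _; simp only [hp]; split <;> norm_num
    choose ν hν using fun x => PhiAux.exists_greatest_weight p hp1 x
    choose μ0 hμ0 using fun (x : P) (h : x ≤ b) => PhiAux.exists_greatest_weight_to p hp1 b x h
    set μ : P → ℤ := fun x => if h : x ≤ b then μ0 x h else 0 with hμdef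
    have hμ : ∀ x (hx : x ≤ b), IsGreatest {w : ℤ | ∃ c : List P, c.Chain' (· ⋖ ·) ∧
        c.head? = some x ∧ c.getLast? = some b ∧ chainWeight p c = w} (μ x) := by
      intro x hx
      simpa only [hμdef, dif_pos hx] using hμ0 x hx
    have hν0 : ∀ x, 0 ≤ ν x := by
      intro x
      obtain ⟨c, ⟨⟨_, hch⟩, _, _⟩, hw⟩ := (hν x).1
      rw [← hw]; exact PhiAux.chainWeight_nonneg p hp0 c hch
    have hνcard : ∀ x, ν x ≤ (Fintype.card P : ℤ) := by
      intro x
      obtain ⟨c, ⟨⟨_, hch⟩, _, _⟩, hw⟩ := (hν x).1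
      rw [← hw]
      calc chainWeight p c ≤ (c.length : ℤ) := PhiAux.chainWeight_le_length p hp1 c hch
      _ ≤ _ := by exact_mod_cast PhiAux.satChain_length_le c hch
    have hμnn : ∀ x, x ≤ b → 0 ≤ μ x := by
      intro x hx
      obtain ⟨c, hch, _, _, hw⟩ := (hμ x hx).1
      rw [← hw]; exact PhiAux.chainWeight_nonneg p hp0 c hch
    set K : ℤ := (Fintype.card P : ℤ) + 2 with hK
    set τ : P → ℤ := fun z => if z ≤ b then K + μ z else 1 + ν z with hτdef
    have hcomb : ∀ u v : P, u ⋖ v → τ v + p u v ≤ τ u := by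
      intro u v huv
      by_cases hv : v ≤ b
      · have hu : u ≤ b := le_trans huv.le hv
        have h1 := PhiAux.greatest_step_to p b huv (hμ u hu) (hμ v hv)
        simp only [hτdef, if_pos hv, if_pos hu]
        omega
      · by_cases hu : u ≤ b
        · have h1 := hνcard v
          have h2 := hp1 u v huv
          have h3 := hμnn u hu
          simp only [hτdef, if_neg hv, if_pos hu]
          omega
        · have h1 := PhiAux.greatest_step p huv (hν u) (hν v)
          simp only [hτdef, if_neg hv, if_neg hu]
          omega
    have hτmem : IsPPartition (fun x y => -ε x y) τ := by
      refine ⟨?_, ?_, ?_⟩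
      · intro x
        by_cases hx : x ≤ b
        · have := hμnn x hx
          simp only [hτdef, if_pos hx]; omega
        · have := hν0 x
          simp only [hτdef, if_neg hx]; omega
      · intro x y hxy
        exact PhiAux.le_step τ (fun u v huv => by
          have h1 := hp0 u v huv
          have h2 := hcomb u v huv
          omega) x y hxy
      · intro u v huv hne
        have hne' : -ε u v = -1 := hne
        have hεuv : ε u v = 1 := by omega
        have hp' : p u v = 1 := by simp [hp, hεuv]
        have := hcomb u v huv
        omega
    obtain ⟨σ, hσ, hστ⟩ := hsurj hτmem
    have hσp : IsPPartition ε σ := hσ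
    have hστ' : ∀ x, σ x + δ x = τ x := fun x => congrFun hστ x
    have hμb : μ b = 0 := by
      obtain ⟨c, hch, hh, hl, hw⟩ := (hμ b le_rfl).1
      rw [PhiAux.chain_self hch hh hl, PhiAux.chainWeight_singleton] at hw
      omega
    have hμa : μ a = p a b := by
      obtain ⟨c, hch, hh, hl, hw⟩ := (hμ a hab.le).1
      rw [PhiAux.chain_eq_pair hab hch hh hl, PhiAux.chainWeight_pair] at hw
      omega
    have h1 : σ b ≤ σ a := hσp.2.1 a b hab.le
    have h2 := hστ' a
    have h3 := hστ' b
    have hτa : τ a = K + μ a := by simp only [hτdef, if_pos hab.le]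
    have hτb : τ b = K + μ b := by simp only [hτdef, if_pos (le_refl b)]
    have hge' := hge a b hab
    rcases hsign a b hab with hε | hε
    · have hpa : p a b = 1 := by simp [hp, hε]
      omega
    · have hpa : p a b = 0 := by norm_num [hp, hε]
      have h4 : σ b < σ a := hσp.2.2 a b hab hε
      omega
  · intro hcons
    have hstep : ∀ σ, IsPPartition ε σ → ∀ u v : P, u ⋖ v → σ v ≤ σ u + ε u v := by
      intro σ hσ u v huv
      rcases hsign u v huv with hε | hε
      · have := hσ.2.1 u v huv.le; omega
      · have := hσ.2.2 u v huv hε; omega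
    refine ⟨?_, ?_, ?_⟩
    · intro σ hσ
      have hσp : IsPPartition ε σ := hσ
      show IsPPartition (fun x y => -ε x y) (fun x => σ x + δ x)
      refine ⟨?_, ?_, ?_⟩
      · intro x
        obtain ⟨c, ⟨⟨hne, hch⟩, hh, hl⟩, hw⟩ := (hδ x).1
        obtain ⟨m, hm⟩ := PhiAux.getLast?_some c hne
        have hcl := PhiAux.chain_le ε σ (hstep σ hσp) c hch x hh m hm
        have h1 := hσp.1 m
        show (1 : ℤ) ≤ σ x + δ x
        omega
      · intro x y hxy
        exact PhiAux.le_step (fun z => σ z + δ z) (fun u v huv => by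
          have h1 := hcons u v huv
          have h2 := hstep σ hσp u v huv
          show σ v + δ v ≤ σ u + δ u
          omega) x y hxy
      · intro u v huv hne
        have hne' : -ε u v = -1 := hne
        have hε : ε u v = 1 := by omega
        have h1 := hcons u v huv
        have h2 := hσp.2.1 u v huv.le
        show σ v + δ v < σ u + δ u
        omega
    · intro σ1 h1 σ2 h2 heq
      funext x
      have h := congrFun heq x
      simp only [] at h
      omega
    · intro τ hτ
      have hτp : IsPPartition (fun x y => -ε x y) τ := hτ
      have hτ1 : ∀ x, 1 ≤ τ x := hτp.1
      have hτstep : ∀ u v : P, u ⋖ v → τ v ≤ τ u + -ε u v := by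
        intro u v huv
        rcases hsign u v huv with hε | hε
        · have := hτp.2.2 u v huv (by show -ε u v = -1; omega)
          omega
        · have := hτp.2.1 u v huv.le; omega
      have hτδ : ∀ x, 1 + δ x ≤ τ x := by
        intro x
        obtain ⟨c, ⟨⟨hne, hch⟩, hh, hl⟩, hw⟩ := (hδ x).1
        obtain ⟨m, hm⟩ := PhiAux.getLast?_some c hne
        have hcl := PhiAux.chain_le (fun u v => -ε u v) τ hτstep c hch x hh m hm
        rw [PhiAux.chainWeight_neg] at hcl
        have h2 := hτ1 m
        omega
      refine ⟨fun x => τ x - δ x, ?_, ?_⟩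
      · show IsPPartition ε (fun x => τ x - δ x)
        refine ⟨?_, ?_, ?_⟩
        · intro x
          have := hτδ x
          show (1 : ℤ) ≤ τ x - δ x
          omega
        · intro x y hxy
          exact PhiAux.le_step (fun z => τ z - δ z) (fun u v huv => by
            have h1 := hcons u v huv
            have h2 := hτstep u v huv
            show τ v - δ v ≤ τ u - δ u
            omega) x y hxy
        · intro u v huv hε
          have h1 := hcons u v huv
          have h2 := hτp.2.1 u v huv.le
          show τ v - δ v < τ u - δ u
          omega
      · funext x
        show τ x - δ x + δ x = τ x
        omega
end
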